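/- arXiv:2203.06992 — 7 statements merged into one kernel-verified Lean document; each statement's English description precedes it below -/
import Mathlib

section
/- Let X be a finite set, and let A_1,...,A_k and B_1,...,B_k be two partitions of X with |A_i| = |B_i| for every i. Define a directed graph G on nodes {1,...,k} with an edge (i,j) if and only if A_i ∩ B_j is nonempty. Then whenever (i,j) is an edge of G, there exists a directed path in G from j to i. -/
/-- Given two partitions `A`, `B` of a finite set `X` into `k` parts of
equal cardinalities, in the directed graph with edge `(i,j)` iff `A i ∩ B j ≠ ∅`,
every edge `(i,j)` admits a directed path back from `j` to `i`. -/
theorem stmt0 {X : Type*} [Fintype X] [DecidableEq X] {k : ℕ}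
    (A B : Fin k → Finset X)
    (hA : ∀ x : X, ∃! i, x ∈ A i)
    (hB : ∀ x : X, ∃! i, x ∈ B i)
    (hcard : ∀ i, (A i).card = (B i).card)
    (i j : Fin k) (hij : (A i ∩ B j).Nonempty) :
    Relation.ReflTransGen (fun p q : Fin k => (A p ∩ B q).Nonempty) j i := by
  classical
  set R := fun p q : Fin k => (A p ∩ B q).Nonempty with hR
  let S : Finset (Fin k) := Finset.univ.filter (fun q => Relation.ReflTransGen R j q)
  have hS : ∀ q, q ∈ S ↔ Relation.ReflTransGen R j q := by
    intro q; simp [S]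
  have hsub : S.biUnion A ⊆ S.biUnion B := by
    intro x hx
    rcases Finset.mem_biUnion.1 hx with ⟨p, hp, hxp⟩
    obtain ⟨q, hq, -⟩ := hB x
    refine Finset.mem_biUnion.2 ⟨q, ?_, hq⟩
    rw [hS] at hp ⊢
    exact hp.tail ⟨x, Finset.mem_inter.2 ⟨hxp, hq⟩⟩
  have hdA : (S : Set (Fin k)).PairwiseDisjoint A := by
    intro p _ q _ hpq
    simp only [Function.onFun, Finset.disjoint_left]
    intro x hxp hxq
    obtain ⟨r, -, hr⟩ := hA x
    exact hpq ((hr p hxp).trans (hr q hxq).symm)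
  have hdB : (S : Set (Fin k)).PairwiseDisjoint B := by
    intro p _ q _ hpq
    simp only [Function.onFun, Finset.disjoint_left]
    intro x hxp hxq
    obtain ⟨r, -, hr⟩ := hB x
    exact hpq ((hr p hxp).trans (hr q hxq).symm)
  have hcardU : (S.biUnion A).card = (S.biUnion B).card := by
    rw [Finset.card_biUnion (fun p hp q hq h => hdA hp hq h),
        Finset.card_biUnion (fun p hp q hq h => hdB hp hq h)]
    exact Finset.sum_congr rfl (fun p _ => hcard p)
  have heq : S.biUnion A = S.biUnion B :=
    Finset.eq_of_subset_of_card_le hsub hcardU.ge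
  obtain ⟨x, hx⟩ := hij
  rw [Finset.mem_inter] at hx
  have hjS : j ∈ S := (hS j).2 Relation.ReflTransGen.refl
  have hxV : x ∈ S.biUnion B := Finset.mem_biUnion.2 ⟨j, hjS, hx.2⟩
  rw [← heq] at hxV
  obtain ⟨p, hpS, hxp⟩ := Finset.mem_biUnion.1 hxV
  obtain ⟨r, -, hr⟩ := hA x
  have hpi : p = i := (hr p hxp).trans (hr i hx.1).symm
  exact (hS i).1 (hpi ▸ hpS)
end

section
/- Suppose G_n = {ξ_{i,n}}_{i=1,...,d_n} is an asymptotically uniform grid on [0,1] with d_n → ∞, i.e., max_{i=1,...,d_n} |ξ_{i,n} − i/d_n| → 0 where the points are sorted increasingly. If G'_n = {ξ'_{i,n}}_{i=1,...,d'_n} is another family of grids on [0,1] such that the cardinality of the symmetric difference |G_n △ G'_n| = o(d_n), then G'_n is also an asymptotically uniform grid on [0,1], i.e., max_{j=1,...,d'_n} |ξ'_{j,n} − j/d'_n| → 0. -/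
open Filter Topology

/-- For a strictly monotone `f : Fin k → ℝ`, `f i ≤ x` iff `i` is less than the number of
indices `a` with `f a ≤ x`. -/
lemma count_char {k : ℕ} {f : Fin k → ℝ} (hf : StrictMono f) (x : ℝ) (i : Fin k) :
    f i ≤ x ↔ (i : ℕ) < (Finset.univ.filter (fun a => f a ≤ x)).card := by
  classical
  constructor
  · intro h
    have hsub : Finset.Iic i ⊆ Finset.univ.filter (fun a => f a ≤ x) := by
      intro a ha
      simp only [Finset.mem_Iic] at ha
      simp only [Finset.mem_filter, Finset.mem_univ, true_and]
      exact le_trans (hf.monotone ha) h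
    have := Finset.card_le_card hsub
    rw [Fin.card_Iic] at this
    omega
  · intro h
    by_contra hx
    push_neg at hx
    have hsub : Finset.univ.filter (fun a => f a ≤ x) ⊆ Finset.Iio i := by
      intro a ha
      simp only [Finset.mem_filter, Finset.mem_univ, true_and] at ha
      simp only [Finset.mem_Iio]
      exact hf.lt_iff_lt.mp (lt_of_le_of_lt ha hx)
    have := Finset.card_le_card hsub
    rw [Fin.card_Iio] at this
    omega

/-- Pure algebraic estimate. -/
lemma algebra_bound {K K' Nr J r e x : ℝ}
    (hKpos : 0 < K) (hK'pos : 0 < K')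
    (hNr1 : Nr ≤ J + 1 + r) (hNr2 : J + 1 ≤ Nr + r)
    (hKK'1 : K ≤ K' + r) (hKK'2 : K' ≤ K + r)
    (hjK' : J + 1 ≤ K') (hNK : Nr ≤ K) (hNnn : 0 ≤ Nr) (hsr : 0 ≤ r)
    (hs2R : 2 * r ≤ K) (he0 : 0 ≤ e) (hJ0 : 0 ≤ J)
    (hxlow : Nr / K - e ≤ x) (hxhigh : x ≤ (Nr + 1) / K + e) :
    |x - (J + 1) / K'| ≤ e + 1 / K + 4 * (r / K) := by
  have hJnn : (0 : ℝ) ≤ J + 1 := by linarith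
  have key1 : Nr / K - (J + 1) / K' ≤ 2 * (r / K) := by
    have hnum : Nr * K' - (J + 1) * K ≤ 2 * r * K' := by
      have e1 : (J + 1) * (K' - K) ≤ (J + 1) * r := mul_le_mul_of_nonneg_left (by linarith) hJnn
      have e2 : (J + 1) * r ≤ K' * r := mul_le_mul_of_nonneg_right hjK' hsr
      have e3 : Nr * K' ≤ (J + 1 + r) * K' := mul_le_mul_of_nonneg_right hNr1 hK'pos.le
      nlinarith [e1, e2, e3]
    rw [div_sub_div _ _ hKpos.ne' hK'pos.ne']
    rw [show 2 * (r / K) = 2 * r / K by ring]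
    rw [div_le_div_iff₀ (by positivity) hKpos]
    nlinarith [mul_le_mul_of_nonneg_right hnum hKpos.le]
  have key2 : (J + 1) / K' - Nr / K ≤ 4 * (r / K) := by
    have hnum2 : (J + 1) * K - Nr * K' ≤ 2 * r * K := by
      have e4 : (J + 1) * K ≤ (Nr + r) * K := mul_le_mul_of_nonneg_right hNr2 hKpos.le
      have e5 : Nr * (K - K') ≤ Nr * r := mul_le_mul_of_nonneg_left (by linarith) hNnn
      have e6 : Nr * r ≤ K * r := mul_le_mul_of_nonneg_right hNK hsr
      nlinarith [e4, e5, e6]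
    have hK2K' : K ≤ 2 * K' := by linarith
    have hnum2' : (J + 1) * K - Nr * K' ≤ 4 * r * K' := by
      nlinarith [mul_nonneg hsr (by linarith : (0:ℝ) ≤ 2 * K' - K)]
    rw [div_sub_div _ _ hK'pos.ne' hKpos.ne']
    rw [show 4 * (r / K) = 4 * r / K by ring]
    rw [div_le_div_iff₀ (by positivity) hKpos]
    nlinarith [mul_le_mul_of_nonneg_right hnum2' hKpos.le]
  have hsplit : (Nr + 1) / K = Nr / K + 1 / K := add_div _ _ _
  have h1k : (0 : ℝ) ≤ 1 / K := by positivity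
  have hrk : (0 : ℝ) ≤ r / K := by positivity
  rw [abs_le]
  constructor
  · linarith
  · linarith

/-- Quantitative key lemma: each point of the perturbed grid is close to its uniform position. -/
lemma key_bound {k k' : ℕ} {f : Fin k → ℝ} {g : Fin k' → ℝ}
    (hf : StrictMono f) (hg : StrictMono g)
    (hgm : ∀ j, g j ∈ Set.Icc (0:ℝ) 1)
    {ε : ℝ} (hε : ∀ i, |f i - ((i : ℕ) + 1) / (k : ℝ)| ≤ ε)
    (hk : 1 ≤ k) (s : ℕ)
    (hs : (symmDiff (Finset.image f Finset.univ) (Finset.image g Finset.univ)).card = s)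
    (hs2 : 2 * s ≤ k) (j : Fin k') :
    |g j - ((j : ℕ) + 1) / (k' : ℝ)| ≤ ε + 1 / (k : ℝ) + 4 * ((s : ℝ) / (k : ℝ)) := by
  classical
  set G : Finset ℝ := Finset.image f Finset.univ with hG_def
  set G' : Finset ℝ := Finset.image g Finset.univ with hG'_def
  have hGcard : G.card = k := by
    rw [hG_def, Finset.card_image_of_injective _ hf.injective, Finset.card_univ,
      Fintype.card_fin]
  have hG'card : G'.card = k' := by
    rw [hG'_def, Finset.card_image_of_injective _ hg.injective, Finset.card_univ,
      Fintype.card_fin]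
  set N : ℕ := (Finset.univ.filter (fun a => f a ≤ g j)).card with hN_def
  have hchar : ∀ i : Fin k, f i ≤ g j ↔ (i : ℕ) < N := fun i => count_char hf (g j) i
  have hN_le_k : N ≤ k := by
    rw [hN_def]
    calc (Finset.univ.filter (fun a => f a ≤ g j)).card ≤ Finset.univ.card :=
          Finset.card_filter_le _ _
      _ = k := by simp
  -- The two filtered sets
  set A : Finset ℝ := G.filter (· ≤ g j) with hA_def
  set B : Finset ℝ := G'.filter (· ≤ g j) with hB_def
  have hAcard : A.card = N := by
    rw [hA_def, hG_def, Finset.filter_image, Finset.card_image_of_injective _ hf.injective,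
      hN_def]
  have hBcard : B.card = (j : ℕ) + 1 := by
    rw [hB_def, hG'_def, Finset.filter_image, Finset.card_image_of_injective _ hg.injective]
    have heq : Finset.univ.filter (fun a : Fin k' => g a ≤ g j) = Finset.Iic j := by
      ext a
      simp [hg.le_iff_le]
    rw [heq, Fin.card_Iic]
  -- symmetric difference bounds
  have hsubAB : A \ B ⊆ symmDiff G G' := by
    intro y hy
    rw [Finset.mem_sdiff, hA_def, Finset.mem_filter] at hy
    obtain ⟨⟨hyG, hyx⟩, hyB⟩ := hy
    rw [Finset.mem_symmDiff]
    left
    exact ⟨hyG, fun h => hyB (by rw [hB_def, Finset.mem_filter]; exact ⟨h, hyx⟩)⟩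
  have hsubBA : B \ A ⊆ symmDiff G G' := by
    intro y hy
    rw [Finset.mem_sdiff, hB_def, Finset.mem_filter] at hy
    obtain ⟨⟨hyG', hyx⟩, hyA⟩ := hy
    rw [Finset.mem_symmDiff]
    right
    exact ⟨hyG', fun h => hyA (by rw [hA_def, Finset.mem_filter]; exact ⟨h, hyx⟩)⟩
  have hN1 : N ≤ (j : ℕ) + 1 + s := by
    have h0 := Finset.card_le_card_sdiff_add_card (s := A) (t := B)
    have h1 : (A \ B).card ≤ s := hs ▸ Finset.card_le_card hsubAB
    omega
  have hN2 : (j : ℕ) + 1 ≤ N + s := by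
    have h0 := Finset.card_le_card_sdiff_add_card (s := B) (t := A)
    have h1 : (B \ A).card ≤ s := hs ▸ Finset.card_le_card hsubBA
    omega
  -- cardinality comparison of the grids
  have hGG' : G \ G' ⊆ symmDiff G G' := by
    intro y hy
    rw [Finset.mem_symmDiff]
    rw [Finset.mem_sdiff] at hy
    exact Or.inl hy
  have hG'G : G' \ G ⊆ symmDiff G G' := by
    intro y hy
    rw [Finset.mem_symmDiff]
    rw [Finset.mem_sdiff] at hy
    exact Or.inr hy
  have hkk'1 : k ≤ k' + s := by
    have h0 := Finset.card_le_card_sdiff_add_card (s := G) (t := G')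
    have h1 : (G \ G').card ≤ s := hs ▸ Finset.card_le_card hGG'
    omega
  have hkk'2 : k' ≤ k + s := by
    have h0 := Finset.card_le_card_sdiff_add_card (s := G') (t := G)
    have h1 : (G' \ G).card ≤ s := hs ▸ Finset.card_le_card hG'G
    omega
  have hjk' : (j : ℕ) + 1 ≤ k' := j.isLt
  have hε0 : 0 ≤ ε := le_trans (abs_nonneg _) (hε ⟨0, hk⟩)
  -- lower bound on g j
  have hxlow : (N : ℝ) / k - ε ≤ g j := by
    rcases Nat.eq_zero_or_pos N with h0 | hpos
    · have hg0 := (hgm j).1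
      rw [h0]
      simp only [Nat.cast_zero, zero_div]
      linarith
    · have hi : N - 1 < k := by omega
      have hfi : f ⟨N - 1, hi⟩ ≤ g j := by
        rw [hchar]
        simp only []
        omega
      have habs := hε ⟨N - 1, hi⟩
      have hcast : ((((⟨N - 1, hi⟩ : Fin k) : ℕ) : ℝ) + 1) = (N : ℝ) := by
        simp only []
        rw [Nat.cast_sub hpos]
        push_cast
        ring
      rw [hcast] at habs
      rw [abs_le] at habs
      linarith [habs.1]
  -- upper bound on g j
  have hkR : (1 : ℝ) ≤ (k : ℝ) := by exact_mod_cast hk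
  have hxhigh : g j ≤ ((N : ℝ) + 1) / k + ε := by
    rcases lt_or_ge N k with hlt | hge
    · have hnot : ¬ f ⟨N, hlt⟩ ≤ g j := by
        rw [hchar]
        simp
      push_neg at hnot
      have habs := hε ⟨N, hlt⟩
      simp only [] at habs
      rw [abs_le] at habs
      have := habs.2
      linarith [hnot.le]
    · have hNk : N = k := le_antisymm hN_le_k hge
      have hg1 := (hgm j).2
      have : (1 : ℝ) ≤ ((N : ℝ) + 1) / k := by
        rw [le_div_iff₀ (by linarith : (0:ℝ) < k), hNk]
        linarith
      linarith
  -- algebraic conclusion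
  have hk'1 : 1 ≤ k' := by omega
  have hK'R : (1 : ℝ) ≤ (k' : ℝ) := by exact_mod_cast hk'1
  have hKpos : (0 : ℝ) < (k : ℝ) := by linarith
  have hK'pos : (0 : ℝ) < (k' : ℝ) := by linarith
  exact algebra_bound (Nr := (N : ℝ)) (r := (s : ℝ)) hKpos hK'pos (by exact_mod_cast hN1) (by exact_mod_cast hN2)
    (by exact_mod_cast hkk'1) (by exact_mod_cast hkk'2) (by exact_mod_cast hjk')
    (by exact_mod_cast hN_le_k) (Nat.cast_nonneg _) (Nat.cast_nonneg _)
    (by exact_mod_cast hs2) hε0 (Nat.cast_nonneg _) hxlow hxhigh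

/-- If `G_n` is an asymptotically uniform grid on `[0,1]` with `d_n → ∞`
and `G'_n` differs from it by `o(d_n)` elements (symmetric difference), then `G'_n`
is an asymptotically uniform grid on `[0,1]`. -/
theorem stmt1 (d d' : ℕ → ℕ)
    (ξ : ∀ n, Fin (d n) → ℝ) (ξ' : ∀ n, Fin (d' n) → ℝ)
    (hd : Tendsto d atTop atTop)
    (hsort : ∀ n, StrictMono (ξ n)) (hsort' : ∀ n, StrictMono (ξ' n))
    (hmem : ∀ n i, ξ n i ∈ Set.Icc (0:ℝ) 1)
    (hmem' : ∀ n j, ξ' n j ∈ Set.Icc (0:ℝ) 1)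
    (hau : Tendsto (fun n => ⨆ i : Fin (d n), |ξ n i - ((i : ℕ) + 1) / (d n)|)
      atTop (𝓝 0))
    (hsd : Tendsto (fun n =>
      ((symmDiff (Finset.image (ξ n) Finset.univ) (Finset.image (ξ' n) Finset.univ)).card : ℝ)
        / (d n)) atTop (𝓝 0)) :
    Tendsto (fun n => ⨆ j : Fin (d' n), |ξ' n j - ((j : ℕ) + 1) / (d' n)|)
      atTop (𝓝 0) := by
  classical
  have hdk : Tendsto (fun n => (d n : ℝ)) atTop atTop := tendsto_natCast_atTop_atTop.comp hd
  have h1k : Tendsto (fun n => 1 / (d n : ℝ)) atTop (𝓝 0) := by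
    simpa [one_div, Pi.inv_def] using hdk.inv_tendsto_atTop
  have hbound : Tendsto (fun n =>
      (⨆ i : Fin (d n), |ξ n i - ((i : ℕ) + 1) / (d n)|) + 1 / (d n : ℝ)
        + 4 * (((symmDiff (Finset.image (ξ n) Finset.univ)
            (Finset.image (ξ' n) Finset.univ)).card : ℝ) / (d n))) atTop (𝓝 0) := by
    have := (hau.add h1k).add (hsd.const_mul 4)
    simp only [add_zero, mul_zero] at this
    convert this using 2
  apply squeeze_zero' (Eventually.of_forall fun n => Real.iSup_nonneg fun j => abs_nonneg _)
    _ hbound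
  have h1 : ∀ᶠ n in atTop, 1 ≤ d n := hd.eventually_ge_atTop 1
  have h2 : ∀ᶠ n in atTop,
      ((symmDiff (Finset.image (ξ n) Finset.univ)
        (Finset.image (ξ' n) Finset.univ)).card : ℝ) / (d n) < 1 / 2 :=
    hsd.eventually (gt_mem_nhds (by norm_num))
  filter_upwards [h1, h2] with n hk hhalf
  set s : ℕ := (symmDiff (Finset.image (ξ n) Finset.univ)
    (Finset.image (ξ' n) Finset.univ)).card with hs_def
  have hkpos : (0 : ℝ) < (d n : ℝ) := by exact_mod_cast Nat.lt_of_lt_of_le Nat.zero_lt_one hk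
  have hs2 : 2 * s ≤ d n := by
    rw [div_lt_iff₀ hkpos] at hhalf
    have h2s : ((2 * s : ℕ) : ℝ) < (d n : ℝ) := by push_cast; linarith
    exact_mod_cast h2s.le
  have hbnd0 : (0 : ℝ) ≤ (⨆ i : Fin (d n), |ξ n i - ((i : ℕ) + 1) / (d n)|) + 1 / (d n : ℝ)
      + 4 * ((s : ℝ) / (d n)) := by
    have hsup0 : (0 : ℝ) ≤ ⨆ i : Fin (d n), |ξ n i - ((i : ℕ) + 1) / (d n)| :=
      Real.iSup_nonneg fun i => abs_nonneg _
    have : (0 : ℝ) ≤ 1 / (d n : ℝ) := by positivity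
    have : (0 : ℝ) ≤ 4 * ((s : ℝ) / (d n)) := by positivity
    linarith
  rcases Nat.eq_zero_or_pos (d' n) with h0 | hpos
  · have hEmpty : IsEmpty (Fin (d' n)) := by rw [h0]; infer_instance
    rw [Real.iSup_of_isEmpty]
    exact hbnd0
  · have hNE : Nonempty (Fin (d' n)) := ⟨⟨0, hpos⟩⟩
    apply ciSup_le
    intro j
    exact key_bound (hsort n) (hsort' n) (hmem' n)
      (fun i => le_ciSup (f := fun i : Fin (d n) => |ξ n i - ((i : ℕ) + 1) / (d n : ℝ)|)
        (Set.Finite.bddAbove (Set.finite_range _)) i) hk s rfl hs2 j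
end

section
/- Suppose G^1_n and G^2_n are two asymptotically uniform grids on [0,1] with cardinalities d^1_n, d^2_n → ∞ satisfying d^j_n/n → 1/2 for j = 1,2, where n = d^1_n + d^2_n. Then the union G^1_n ∪ G^2_n (counted with multiplicity, sorted increasingly) is an asymptotically uniform grid on [0,1]. -/
open Filter Topology

lemma countP_ofFn {α : Type*} {n : ℕ} (f : Fin n → α) (p : α → Bool) :
    (List.ofFn f).countP p = (Finset.univ.filter fun i => p (f i)).card := by
  rw [List.ofFn_eq_map, List.countP_map, List.countP_eq_length_filter,
    Finset.filter, Fin.univ_def]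
  simp [Finset.card, Multiset.filter_coe, Function.comp_def]

lemma count_le_ub {d : ℕ} (f : Fin d → ℝ) (ε t : ℝ) (hε : 0 ≤ ε) (ht : 0 ≤ t)
    (h : ∀ i, |f i - ((i : ℕ) + 1) / d| ≤ ε) :
    ((Finset.univ.filter fun i => f i ≤ t).card : ℝ) ≤ d * (t + ε) := by
  set S := Finset.univ.filter fun i : Fin d => f i ≤ t with hS
  rcases S.eq_empty_or_nonempty with h0 | hne
  · simp [h0]; positivity
  · set i0 := S.max' hne with hi0
    have hd : 0 < d := i0.pos
    have hmem : f i0 ≤ t := (Finset.mem_filter.1 (S.max'_mem hne)).2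
    have hsub : S ⊆ Finset.Iic i0 := fun i hi => Finset.mem_Iic.2 (S.le_max' i hi)
    have hcard : S.card ≤ (i0 : ℕ) + 1 := by
      simpa [Fin.card_Iic] using Finset.card_le_card hsub
    have h1 : ((i0 : ℕ) + 1 : ℝ) / d ≤ t + ε := by
      have := abs_le.1 (h i0)
      linarith [this.1]
    have h2 : ((i0 : ℕ) + 1 : ℝ) ≤ d * (t + ε) := by
      rw [div_le_iff₀ (by positivity : (0:ℝ) < d)] at h1
      linarith
    calc (S.card : ℝ) ≤ ((i0 : ℕ) + 1 : ℝ) := by exact_mod_cast hcard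
      _ ≤ _ := h2

lemma count_lt_lb {d : ℕ} (f : Fin d → ℝ) (hm : Monotone f) (ε t : ℝ) (hε : 0 ≤ ε)
    (ht : t ≤ 1) (h : ∀ i, |f i - ((i : ℕ) + 1) / d| ≤ ε) :
    (d : ℝ) * (t - ε) - 1 ≤ ((Finset.univ.filter fun i => f i < t).card : ℝ) := by
  set S := Finset.univ.filter fun i : Fin d => f i < t with hS
  have hk_le : S.card ≤ d := by
    simpa using Finset.card_le_card (Finset.filter_subset _ (Finset.univ : Finset (Fin d)))
  rcases eq_or_lt_of_le hk_le with heq | hkd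
  · have : (d : ℝ) * (t - ε) ≤ d * 1 := by
      apply mul_le_mul_of_nonneg_left (by linarith) (by positivity)
    rw [heq]
    linarith
  · set i0 : Fin d := ⟨S.card, hkd⟩ with hi0def
    have hd : 0 < d := i0.pos
    have hnot : ¬ f i0 < t := by
      intro hlt
      have hsub : Finset.Iic i0 ⊆ S := by
        intro j hj
        exact Finset.mem_filter.2 ⟨Finset.mem_univ _,
          lt_of_le_of_lt (hm (Finset.mem_Iic.1 hj)) hlt⟩
      have := Finset.card_le_card hsub
      rw [Fin.card_Iic] at this
      simp [hi0def] at this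
    push_neg at hnot
    have h1 : t - ε ≤ ((S.card : ℕ) + 1 : ℝ) / d := by
      have := abs_le.1 (h i0)
      have hv : ((i0 : ℕ) : ℝ) = S.card := by simp [hi0def]
      have := this.2
      rw [sub_le_iff_le_add] at this
      calc t - ε ≤ f i0 - ε := by linarith
        _ ≤ ε + ((i0 : ℕ) + 1 : ℝ) / d - ε := by linarith
        _ = ((i0 : ℕ) + 1 : ℝ) / d := by ring
        _ = ((S.card : ℕ) + 1 : ℝ) / d := by rw [hv]
    rw [le_div_iff₀ (by positivity : (0:ℝ) < d)] at h1
    nlinarith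

lemma key {a b : ℕ} (ha : 0 < a) (hb : 0 < b)
    (f : Fin a → ℝ) (g : Fin b → ℝ) (η : Fin (a + b) → ℝ)
    (hfm : Monotone f) (hgm : Monotone g) (hηm : Monotone η)
    (hf01 : ∀ i, f i ∈ Set.Icc (0:ℝ) 1) (hg01 : ∀ i, g i ∈ Set.Icc (0:ℝ) 1)
    (ε1 ε2 : ℝ) (hε1 : 0 ≤ ε1) (hε2 : 0 ≤ ε2)
    (h1 : ∀ i, |f i - ((i : ℕ) + 1) / a| ≤ ε1)
    (h2 : ∀ i, |g i - ((i : ℕ) + 1) / b| ≤ ε2)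
    (hperm : (List.ofFn η).Perm (List.ofFn f ++ List.ofFn g))
    (j : Fin (a + b)) :
    |η j - ((j : ℕ) + 1) / ((a : ℝ) + b)| ≤ ε1 + ε2 + 1 / ((a : ℝ) + b) := by
  set t := η j with htdef
  have hN : (0:ℝ) < (a:ℝ) + b := by positivity
  -- t ∈ [0,1]
  have ht01 : t ∈ Set.Icc (0:ℝ) 1 := by
    have hmem : t ∈ List.ofFn η := by
      rw [List.mem_ofFn]; exact ⟨j, rfl⟩
    have := hperm.mem_iff.1 hmem
    rcases List.mem_append.1 this with h | h
    · obtain ⟨i, hi⟩ := List.mem_ofFn.1 h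
      exact hi ▸ hf01 i
    · obtain ⟨i, hi⟩ := List.mem_ofFn.1 h
      exact hi ▸ hg01 i
  -- count equalities from the permutation
  have hcnt_le : (Finset.univ.filter fun j' => η j' ≤ t).card
      = (Finset.univ.filter fun i => f i ≤ t).card
        + (Finset.univ.filter fun i => g i ≤ t).card := by
    have := hperm.countP_eq (fun x => decide (x ≤ t))
    rw [List.countP_append] at this
    simpa [countP_ofFn] using this
  have hcnt_lt : (Finset.univ.filter fun j' => η j' < t).card
      = (Finset.univ.filter fun i => f i < t).card
        + (Finset.univ.filter fun i => g i < t).card := by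
    have := hperm.countP_eq (fun x => decide (x < t))
    rw [List.countP_append] at this
    simpa [countP_ofFn] using this
  -- j+1 ≤ count(η ≤ t)
  have hlow : (j : ℕ) + 1 ≤ (Finset.univ.filter fun j' => η j' ≤ t).card := by
    have hsub : Finset.Iic j ⊆ Finset.univ.filter fun j' => η j' ≤ t := by
      intro j' hj'
      exact Finset.mem_filter.2 ⟨Finset.mem_univ _, hηm (Finset.mem_Iic.1 hj')⟩
    simpa [Fin.card_Iic] using Finset.card_le_card hsub
  -- count(η < t) ≤ j
  have hup : (Finset.univ.filter fun j' => η j' < t).card ≤ (j : ℕ) := by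
    have hsub : (Finset.univ.filter fun j' => η j' < t) ⊆ Finset.Iio j := by
      intro j' hj'
      have hlt := (Finset.mem_filter.1 hj').2
      rw [Finset.mem_Iio]
      by_contra hc
      exact absurd (hηm (le_of_not_gt hc)) (not_le.2 hlt)
    simpa [Fin.card_Iio] using Finset.card_le_card hsub
  have A := count_le_ub f ε1 t hε1 ht01.1 h1
  have B := count_le_ub g ε2 t hε2 ht01.1 h2
  have C := count_lt_lb f hfm ε1 t hε1 ht01.2 h1
  have D := count_lt_lb g hgm ε2 t hε2 ht01.2 h2
  have ha' : (1:ℝ) ≤ a := by exact_mod_cast ha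
  have hb' : (1:ℝ) ≤ b := by exact_mod_cast hb
  -- cast key inequalities
  have key1 : ((j : ℕ) : ℝ) + 1 ≤ ((a:ℝ) + b) * t + ((a:ℝ) + b) * (ε1 + ε2) := by
    have hle : (((j:ℕ):ℝ) + 1) ≤ ((Finset.univ.filter fun i => f i ≤ t).card : ℝ)
        + ((Finset.univ.filter fun i => g i ≤ t).card : ℝ) := by
      rw [hcnt_le] at hlow
      exact_mod_cast hlow
    nlinarith [A, B, mul_nonneg (le_trans zero_le_one ha') hε2,
      mul_nonneg (le_trans zero_le_one hb') hε1]
  have key2 : ((a:ℝ) + b) * t ≤ ((j : ℕ) : ℝ) + 1 + ((a:ℝ) + b) * (ε1 + ε2) + 1 := by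
    have hge : ((Finset.univ.filter fun i => f i < t).card : ℝ)
        + ((Finset.univ.filter fun i => g i < t).card : ℝ) ≤ ((j:ℕ):ℝ) := by
      rw [hcnt_lt] at hup
      exact_mod_cast hup
    nlinarith [C, D, mul_nonneg (le_trans zero_le_one ha') hε2,
      mul_nonneg (le_trans zero_le_one hb') hε1]
  rw [abs_sub_le_iff]
  constructor
  · -- t - (j+1)/N ≤ ε
    have : t ≤ (((j:ℕ):ℝ) + 1) / ((a:ℝ) + b) + (ε1 + ε2) + 1 / ((a:ℝ) + b) := by
      rw [← mul_le_mul_iff_right₀ hN]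
      have e1 : ((a:ℝ)+b) * ((((j:ℕ):ℝ) + 1) / ((a:ℝ) + b)) = ((j:ℕ):ℝ) + 1 := by
        field_simp
      have e2 : ((a:ℝ)+b) * (1 / ((a:ℝ) + b)) = 1 := by field_simp
      calc ((a:ℝ)+b) * t ≤ ((j:ℕ):ℝ) + 1 + ((a:ℝ)+b) * (ε1+ε2) + 1 := key2
        _ = ((a:ℝ)+b) * ((((j:ℕ):ℝ) + 1) / ((a:ℝ) + b)) + ((a:ℝ)+b) * (ε1+ε2)
            + ((a:ℝ)+b) * (1 / ((a:ℝ) + b)) := by rw [e1, e2]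
        _ = ((a:ℝ)+b) * ((((j:ℕ):ℝ) + 1) / ((a:ℝ) + b) + (ε1+ε2) + 1 / ((a:ℝ) + b)) := by
            ring
    linarith
  · -- (j+1)/N - t ≤ ε
    have : (((j:ℕ):ℝ) + 1) / ((a:ℝ) + b) ≤ t + (ε1 + ε2) := by
      rw [div_le_iff₀ hN]
      nlinarith [key1]
    have h1N : 0 < 1 / ((a:ℝ) + b) := by positivity
    linarith
/-- The union (with multiplicity, sorted increasingly) of two
asymptotically uniform grids on `[0,1]` whose cardinalities are both asymptotically
half of the total is again an asymptotically uniform grid on `[0,1]`. -/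
theorem stmt2 (d1 d2 : ℕ → ℕ)
    (ξ1 : ∀ n, Fin (d1 n) → ℝ) (ξ2 : ∀ n, Fin (d2 n) → ℝ)
    (η : ∀ n, Fin (d1 n + d2 n) → ℝ)
    (hd1 : Tendsto d1 atTop atTop) (hd2 : Tendsto d2 atTop atTop)
    (hmem1 : ∀ n i, ξ1 n i ∈ Set.Icc (0:ℝ) 1)
    (hmem2 : ∀ n i, ξ2 n i ∈ Set.Icc (0:ℝ) 1)
    (hsort1 : ∀ n, StrictMono (ξ1 n)) (hsort2 : ∀ n, StrictMono (ξ2 n))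
    (hhalf1 : Tendsto (fun n => (d1 n : ℝ) / ((d1 n : ℝ) + (d2 n : ℝ))) atTop (𝓝 (1/2)))
    (hhalf2 : Tendsto (fun n => (d2 n : ℝ) / ((d1 n : ℝ) + (d2 n : ℝ))) atTop (𝓝 (1/2)))
    (hau1 : Tendsto (fun n => ⨆ i : Fin (d1 n), |ξ1 n i - ((i : ℕ) + 1) / (d1 n)|)
      atTop (𝓝 0))
    (hau2 : Tendsto (fun n => ⨆ i : Fin (d2 n), |ξ2 n i - ((i : ℕ) + 1) / (d2 n)|)
      atTop (𝓝 0))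
    (hηmono : ∀ n, Monotone (η n))
    (hperm : ∀ n, (List.ofFn (η n)).Perm (List.ofFn (ξ1 n) ++ List.ofFn (ξ2 n))) :
    Tendsto (fun n => ⨆ j : Fin (d1 n + d2 n),
      |η n j - ((j : ℕ) + 1) / ((d1 n : ℝ) + (d2 n : ℝ))|) atTop (𝓝 0) := by

  set ε1 : ℕ → ℝ := fun n => ⨆ i : Fin (d1 n), |ξ1 n i - ((i : ℕ) + 1) / (d1 n)| with hε1def
  set ε2 : ℕ → ℝ := fun n => ⨆ i : Fin (d2 n), |ξ2 n i - ((i : ℕ) + 1) / (d2 n)| with hε2def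
  set g : ℕ → ℝ := fun n => ε1 n + ε2 n + 1 / ((d1 n : ℝ) + (d2 n : ℝ)) with hgdef
  have hNtop : Tendsto (fun n => (d1 n : ℝ) + (d2 n : ℝ)) atTop atTop :=
    Filter.Tendsto.atTop_add_atTop (tendsto_natCast_atTop_atTop.comp hd1)
      (tendsto_natCast_atTop_atTop.comp hd2)
  have hg : Tendsto g atTop (𝓝 0) := by
    have h3 : Tendsto (fun n => 1 / ((d1 n : ℝ) + (d2 n : ℝ))) atTop (𝓝 0) := by
      simpa [one_div, Pi.inv_def] using hNtop.inv_tendsto_atTop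
    have := (hau1.add hau2).add h3
    simpa [hgdef, one_div] using this
  apply squeeze_zero' (g := g) ?_ ?_ hg
  · exact Eventually.of_forall fun n => Real.iSup_nonneg fun j => abs_nonneg _
  · filter_upwards [hd1.eventually_ge_atTop 1, hd2.eventually_ge_atTop 1] with n hn1 hn2
    haveI : Nonempty (Fin (d1 n + d2 n)) := ⟨⟨0, by omega⟩⟩
    refine ciSup_le fun j => ?_
    have hb1 : ∀ i, |ξ1 n i - ((i : ℕ) + 1) / (d1 n)| ≤ ε1 n := by
      intro i
      simp only [hε1def]
      exact le_ciSup (f := fun i : Fin (d1 n) => |ξ1 n i - (((i : ℕ) : ℝ) + 1) / (d1 n : ℝ)|)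
        (Set.Finite.bddAbove (Set.finite_range _)) i
    have hb2 : ∀ i, |ξ2 n i - ((i : ℕ) + 1) / (d2 n)| ≤ ε2 n := by
      intro i
      simp only [hε2def]
      exact le_ciSup (f := fun i : Fin (d2 n) => |ξ2 n i - (((i : ℕ) : ℝ) + 1) / (d2 n : ℝ)|)
        (Set.Finite.bddAbove (Set.finite_range _)) i
    have hε1n : 0 ≤ ε1 n := Real.iSup_nonneg fun i => abs_nonneg _
    have hε2n : 0 ≤ ε2 n := Real.iSup_nonneg fun i => abs_nonneg _
    exact key hn1 hn2 (ξ1 n) (ξ2 n) (η n) (hsort1 n).monotone (hsort2 n).monotone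
      (hηmono n) (hmem1 n) (hmem2 n) (ε1 n) (ε2 n) hε1n hε2n hb1 hb2 (hperm n) j
end

section
/- Let T be a real symmetric n×n matrix that is centrosymmetric, i.e., Y_n T Y_n = T where Y_n is the flip matrix. Then there exists an orthonormal basis of ℝ^n consisting of eigenvectors of T such that ⌈n/2⌉ of the basis vectors are symmetric (Y_n v = v) and the other ⌊n/2⌋ are skew-symmetric (Y_n v = −v). -/
open Matrix

/-- The `n×n` flip (anti-identity) matrix. -/
def flipMatrix (n : ℕ) : Matrix (Fin n) (Fin n) ℝ :=
  Matrix.of fun i j => if (i : ℕ) + (j : ℕ) + 2 = n + 1 then 1 else 0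


lemma flip_apply (n : ℕ) (i j : Fin n) :
    flipMatrix n i j = if j = i.rev then 1 else 0 := by
  unfold flipMatrix
  simp only [Matrix.of_apply]
  congr 1
  simp only [eq_iff_iff]
  constructor
  · intro h; ext; simp [Fin.val_rev]; omega
  · intro h; subst h; simp [Fin.val_rev]; omega

lemma flip_mulVec (n : ℕ) (x : Fin n → ℝ) :
    (flipMatrix n).mulVec x = fun i => x i.rev := by
  funext i
  simp only [mulVec, dotProduct, flip_apply]
  rw [Finset.sum_eq_single i.rev]
  · simp
  · intro b _ hb; simp [hb]
  · simp

lemma flip_entry {n : ℕ} {T : Matrix (Fin n) (Fin n) ℝ}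
    (hcentro : flipMatrix n * T * flipMatrix n = T) (i j : Fin n) :
    T i.rev j.rev = T i j := by
  have h1 : ∀ M : Matrix (Fin n) (Fin n) ℝ, ∀ i j : Fin n,
      (flipMatrix n * M) i j = M i.rev j := by
    intro M i j
    simp only [Matrix.mul_apply, flip_apply]
    rw [Finset.sum_eq_single i.rev] <;> simp_all
  have h2 : ∀ M : Matrix (Fin n) (Fin n) ℝ, ∀ i j : Fin n,
      (M * flipMatrix n) i j = M i j.rev := by
    intro M i j
    simp only [Matrix.mul_apply, flip_apply]
    rw [Finset.sum_eq_single j.rev]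
    · simp [Fin.rev_rev]
    · intro b _ hb
      have : j ≠ b.rev := fun h => hb (by rw [h, Fin.rev_rev])
      simp [this]
    · simp [Fin.rev_rev]
  have := congrFun (congrFun hcentro i) j
  rwa [h2, h1] at this

noncomputable section
variable (n : ℕ)
abbrev Esp := EuclideanSpace ℝ (Fin n)


def symSub : Submodule ℝ (Esp n) where
  carrier := {x | ∀ i : Fin n, x i.rev = x i}
  add_mem' := fun ha hb i => by simp_all [PiLp.add_apply]
  zero_mem' := fun i => rfl
  smul_mem' := fun c x hx i => by simp_all [PiLp.smul_apply]

def skewSub : Submodule ℝ (Esp n) where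
  carrier := {x | ∀ i : Fin n, x i.rev = -x i}
  add_mem' := fun ha hb i => by simp_all [PiLp.add_apply]; ring
  zero_mem' := fun i => by simp
  smul_mem' := fun c x hx i => by simp_all [PiLp.smul_apply]

lemma symExt_lt (i : Fin n) : min i.val (n - 1 - i.val) < (n+1)/2 := by
  have := i.isLt; omega

def symExtFun (x : Fin ((n+1)/2) → ℝ) : Esp n :=
  WithLp.toLp 2 fun i : Fin n => x ⟨min i.val (n - 1 - i.val), symExt_lt n i⟩

lemma symExtFun_mem (x : Fin ((n+1)/2) → ℝ) : symExtFun n x ∈ symSub n := by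
  intro i
  show x _ = x _
  apply congrArg
  apply Fin.ext
  simp only [Fin.val_rev]
  have := i.isLt; omega

def symEquiv : symSub n ≃ₗ[ℝ] (Fin ((n+1)/2) → ℝ) where
  toFun u := fun k => u.val ⟨k.val, by have := k.isLt; omega⟩
  map_add' u v := rfl
  map_smul' c u := rfl
  invFun x := ⟨symExtFun n x, symExtFun_mem n x⟩
  left_inv u := by
    apply Subtype.ext
    ext i
    show u.val _ = u.val i
    rcases le_or_gt i.val (n - 1 - i.val) with h | h
    · apply congrArg; apply Fin.ext; simp; omega
    · suffices H : ∀ j : Fin n, (j : ℕ) = n - 1 - i.val → u.val j = u.val i by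
        exact H _ (by simp; omega)
      intro j hj
      have : j = i.rev := by apply Fin.ext; simp [Fin.val_rev]; have := i.isLt; omega
      rw [this]; exact u.2 i
  right_inv x := by
    funext k
    show x _ = x k
    apply congrArg; apply Fin.ext; simp; have := k.isLt; omega

def skewExtFun (x : Fin (n/2) → ℝ) : Esp n :=
  WithLp.toLp 2 fun i : Fin n => if h : i.val < n/2 then x ⟨i.val, h⟩
    else if h' : n - 1 - i.val < n/2 then -x ⟨n - 1 - i.val, h'⟩ else 0

lemma skewExtFun_apply₁ (x : Fin (n/2) → ℝ) (i : Fin n) (j : Fin (n/2))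
    (h : i.val = j.val) : skewExtFun n x i = x j := by
  unfold skewExtFun
  rw [PiLp.toLp_apply]
  rw [dif_pos (h ▸ j.isLt)]
  exact congrArg x (Fin.ext h)

lemma skewExtFun_apply₂ (x : Fin (n/2) → ℝ) (i : Fin n) (j : Fin (n/2))
    (h : n - 1 - i.val = j.val) (h2 : ¬ i.val < n/2) : skewExtFun n x i = -x j := by
  unfold skewExtFun
  rw [PiLp.toLp_apply]
  rw [dif_neg h2, dif_pos (h ▸ j.isLt)]
  exact congrArg (fun t => -x t) (Fin.ext h)

lemma skewExtFun_apply₃ (x : Fin (n/2) → ℝ) (i : Fin n)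
    (h : ¬ i.val < n/2) (h2 : ¬ n - 1 - i.val < n/2) : skewExtFun n x i = 0 := by
  unfold skewExtFun
  rw [PiLp.toLp_apply]
  rw [dif_neg h, dif_neg h2]

lemma skewExtFun_mem (x : Fin (n/2) → ℝ) : skewExtFun n x ∈ skewSub n := by
  intro i
  have hi := i.isLt
  have hrev : (i.rev : ℕ) = n - 1 - i.val := by simp [Fin.val_rev]; omega
  by_cases h : i.val < n/2
  · rw [skewExtFun_apply₁ n x i ⟨i.val, h⟩ rfl,
      skewExtFun_apply₂ n x i.rev ⟨i.val, h⟩ (by simp [Fin.val_rev]; omega)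
        (by simp [Fin.val_rev]; omega)]
  · by_cases h' : n - 1 - i.val < n/2
    · rw [skewExtFun_apply₂ n x i ⟨n - 1 - i.val, h'⟩ rfl h,
        skewExtFun_apply₁ n x i.rev ⟨n - 1 - i.val, h'⟩ (by simp [Fin.val_rev]; omega), neg_neg]
    · rw [skewExtFun_apply₃ n x i h h',
        skewExtFun_apply₃ n x i.rev (by simp [Fin.val_rev]; omega)
          (by simp [Fin.val_rev]; omega), neg_zero]

def skewEquiv : skewSub n ≃ₗ[ℝ] (Fin (n/2) → ℝ) where
  toFun u := fun k => u.val ⟨k.val, by have := k.isLt; omega⟩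
  map_add' u v := rfl
  map_smul' c u := rfl
  invFun x := ⟨skewExtFun n x, skewExtFun_mem n x⟩
  left_inv u := by
    apply Subtype.ext
    ext i
    have hi := i.isLt
    dsimp only
    show skewExtFun n _ i = u.val i
    by_cases h : i.val < n/2
    · rw [skewExtFun_apply₁ n _ i ⟨i.val, h⟩ rfl]
    · by_cases h' : n - 1 - i.val < n/2
      · rw [skewExtFun_apply₂ n _ i ⟨n - 1 - i.val, h'⟩ rfl h]
        show -u.val _ = u.val i
        suffices H : ∀ j : Fin n, (j : ℕ) = n - 1 - i.val → -u.val j = u.val i by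
          exact H _ rfl
        intro j hj
        have : j = i.rev := by apply Fin.ext; simp [Fin.val_rev]; omega
        rw [this, u.2 i]; ring
      · rw [skewExtFun_apply₃ n _ i h h']
        have hrev : i.rev = i := by apply Fin.ext; simp [Fin.val_rev]; omega
        have := u.2 i
        rw [hrev] at this
        linarith
  right_inv x := by
    funext k
    show skewExtFun n x _ = x k
    rw [skewExtFun_apply₁ n x _ k rfl]

lemma finrank_symSub : Module.finrank ℝ (symSub n) = (n+1)/2 := by
  rw [(symEquiv n).finrank_eq]
  simp [Module.finrank_pi]
lemma finrank_skewSub : Module.finrank ℝ (skewSub n) = n/2 := by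
  rw [(skewEquiv n).finrank_eq]
  simp [Module.finrank_pi]

lemma mem_symSub_iff (x : Esp n) : x ∈ symSub n ↔ ∀ i : Fin n, x i.rev = x i := Iff.rfl
lemma mem_skewSub_iff (x : Esp n) : x ∈ skewSub n ↔ ∀ i : Fin n, x i.rev = -x i := Iff.rfl

lemma dot_eq_inner (x y : Esp n) :
    (WithLp.equiv 2 _ x) ⬝ᵥ (WithLp.equiv 2 _ y) = (inner ℝ x y : ℝ) := by
  simp [dotProduct, PiLp.inner_apply, RCLike.inner_apply, WithLp.equiv_apply, mul_comm]

lemma sym_skew_dot {u w : Esp n} (hu : u ∈ symSub n) (hw : w ∈ skewSub n) :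
    (inner ℝ u w : ℝ) = 0 := by
  rw [mem_symSub_iff] at hu; rw [mem_skewSub_iff] at hw
  have h : (inner ℝ u w : ℝ) = ∑ i, u i * w i := by
    simp [PiLp.inner_apply, RCLike.inner_apply, mul_comm]
  have h2 : ∑ i, u i * w i = ∑ i : Fin n, u i.rev * w i.rev :=
    (Fintype.sum_equiv Fin.revPerm _ _ (fun i => rfl)).symm
  have h3 : ∑ i : Fin n, u i.rev * w i.rev = -∑ i, u i * w i := by
    rw [← Finset.sum_neg_distrib]
    exact Finset.sum_congr rfl fun i _ => by rw [hu i, hw i]; ring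
  have := h2.trans h3
  linarith [h, this]

/-- a real symmetric centrosymmetric matrix admits an orthonormal
eigenvector basis of `ℝⁿ` in which `⌈n/2⌉` vectors are symmetric (`Y v = v`) and
the other `⌊n/2⌋` are skew-symmetric (`Y v = -v`). -/
theorem stmt6 (n : ℕ) (T : Matrix (Fin n) (Fin n) ℝ)
    (hsymm : Tᵀ = T) (hcentro : flipMatrix n * T * flipMatrix n = T) :
    ∃ (v : Fin n → Fin n → ℝ) (μ : Fin n → ℝ) (s : Finset (Fin n)),
      s.card = (n + 1) / 2 ∧
      (∀ i j, v i ⬝ᵥ v j = if i = j then 1 else 0) ∧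
      (∀ i, T.mulVec (v i) = μ i • v i) ∧
      (∀ i ∈ s, (flipMatrix n).mulVec (v i) = v i) ∧
      (∀ i ∉ s, (flipMatrix n).mulVec (v i) = -v i) := by
  have hpq : (n+1)/2 + n/2 = n := by omega
  have hherm : T.IsHermitian := by
    ext i j
    simpa [Matrix.conjTranspose_apply] using congrFun (congrFun hsymm i) j
  have hTsym : (Matrix.toEuclideanLin T).IsSymmetric :=
    Matrix.isHermitian_iff_isSymmetric.mp hherm
  have hT2 : ∀ i j, T i.rev j.rev = T i j := flip_entry hcentro
  -- mulVec symmetry transfer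
  have key : ∀ (x : Esp n) (i : Fin n),
      (Matrix.toEuclideanLin T x) i.rev = ∑ j, T i j * x j.rev := by
    intro x i
    show ∑ j, T i.rev j * x j = _
    rw [← Fintype.sum_equiv Fin.revPerm (fun j => T i.rev j.rev * x j.rev) _ (fun j => rfl)]
    exact Finset.sum_congr rfl fun j _ => by rw [hT2]
  have keyId : ∀ (x : Esp n) (i : Fin n),
      (Matrix.toEuclideanLin T x) i = ∑ j, T i j * x j := fun x i => rfl
  have hUinv : ∀ x ∈ symSub n, Matrix.toEuclideanLin T x ∈ symSub n := by
    intro x hx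
    rw [mem_symSub_iff] at hx ⊢
    intro i
    rw [key, keyId]
    exact Finset.sum_congr rfl fun j _ => by rw [hx j]
  have hWinv : ∀ x ∈ skewSub n, Matrix.toEuclideanLin T x ∈ skewSub n := by
    intro x hx
    rw [mem_skewSub_iff] at hx ⊢
    intro i
    rw [key, keyId, ← Finset.sum_neg_distrib]
    exact Finset.sum_congr rfl fun j _ => by rw [hx j]; ring
  set TU := (Matrix.toEuclideanLin T).restrict hUinv with hTU
  set TW := (Matrix.toEuclideanLin T).restrict hWinv with hTW
  have hTUsym : TU.IsSymmetric := hTsym.restrict_invariant hUinv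
  have hTWsym : TW.IsSymmetric := hTsym.restrict_invariant hWinv
  set bU := hTUsym.eigenvectorBasis (finrank_symSub n) with hbU
  set bW := hTWsym.eigenvectorBasis (finrank_skewSub n) with hbW
  set μU := hTUsym.eigenvalues (finrank_symSub n) with hμU
  set μW := hTWsym.eigenvalues (finrank_skewSub n) with hμW
  have eigU : ∀ k, Matrix.toEuclideanLin T (bU k).val = μU k • (bU k).val := by
    intro k
    have := hTUsym.apply_eigenvectorBasis (finrank_symSub n) k
    have h2 := congrArg Subtype.val this
    rwa [LinearMap.restrict_coe_apply] at h2
  have eigW : ∀ k, Matrix.toEuclideanLin T (bW k).val = μW k • (bW k).val := by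
    intro k
    have := hTWsym.apply_eigenvectorBasis (finrank_skewSub n) k
    have h2 := congrArg Subtype.val this
    rwa [LinearMap.restrict_coe_apply] at h2
  set e : Fin ((n+1)/2) ⊕ Fin (n/2) ≃ Fin n := finSumFinEquiv.trans (finCongr hpq) with he
  set v : Fin n → Fin n → ℝ := fun i =>
    Sum.elim (fun k => WithLp.equiv 2 _ (bU k).val) (fun k => WithLp.equiv 2 _ (bW k).val)
      (e.symm i) with hv
  set μ : Fin n → ℝ := fun i => Sum.elim μU μW (e.symm i) with hμ
  set s : Finset (Fin n) := Finset.univ.image (fun k : Fin ((n+1)/2) => e (Sum.inl k)) with hs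
  refine ⟨v, μ, s, ?_, ?_, ?_, ?_, ?_⟩
  · have hinj : Function.Injective fun k : Fin ((n+1)/2) => e (Sum.inl k) :=
      fun a b h => Sum.inl_injective (e.injective h)
    rw [Finset.card_image_of_injective _ hinj]
    simp
  · -- orthonormality
    intro i j
    have hij : (i = j) ↔ (e.symm i = e.symm j) := by
      constructor
      · intro h; rw [h]
      · intro h; simpa using congrArg e h
    rcases hi : e.symm i with k | k <;> rcases hj : e.symm j with l | l <;>
      simp only [hv, hi, hj, Sum.elim_inl, Sum.elim_inr]
    · rw [dot_eq_inner, ← Submodule.coe_inner,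
        orthonormal_iff_ite.mp bU.orthonormal k l]
      have hkl : (i = j) ↔ (k = l) := by rw [hij, hi, hj]; simp
      simp [hkl]
    · rw [dot_eq_inner, sym_skew_dot n (bU k).2 (bW l).2]
      have hne : i ≠ j := by intro hh; rw [hij, hi, hj] at hh; simp at hh
      rw [if_neg hne]
    · have : (inner ℝ (bW k).val (bU l).val : ℝ) = 0 := by
        rw [real_inner_comm]; exact sym_skew_dot n (bU l).2 (bW k).2
      have hne : i ≠ j := by intro hh; rw [hij, hi, hj] at hh; simp at hh
      rw [dot_eq_inner, this, if_neg hne]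
    · rw [dot_eq_inner, ← Submodule.coe_inner,
        orthonormal_iff_ite.mp bW.orthonormal k l]
      have hkl : (i = j) ↔ (k = l) := by rw [hij, hi, hj]; simp
      simp [hkl]
  · -- eigenvectors
    intro i
    rcases hi : e.symm i with k | k <;>
      simp only [hv, hμ, hi, Sum.elim_inl, Sum.elim_inr]
    · have := eigU k
      funext t
      have h2 := congrFun (congrArg (WithLp.equiv 2 (Fin n → ℝ)) this) t
      simpa [Matrix.toEuclideanLin_apply, WithLp.equiv_apply] using h2
    · have := eigW k
      funext t
      have h2 := congrFun (congrArg (WithLp.equiv 2 (Fin n → ℝ)) this) t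
      simpa [Matrix.toEuclideanLin_apply, WithLp.equiv_apply] using h2
  · -- symmetric part
    intro i hi
    rw [hs, Finset.mem_image] at hi
    obtain ⟨k, -, hk⟩ := hi
    have hsymm_i : e.symm i = Sum.inl k := by rw [← hk]; simp
    rw [flip_mulVec]
    funext t
    simp only [hv, hsymm_i, Sum.elim_inl, WithLp.equiv_apply]
    exact (mem_symSub_iff n _).mp (bU k).2 t
  · -- skew part
    intro i hi
    have : ∃ k, e.symm i = Sum.inr k := by
      rcases h : e.symm i with k | k
      · exfalso
        apply hi
        rw [hs, Finset.mem_image]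
        exact ⟨k, Finset.mem_univ k, by rw [← h]; simp⟩
      · exact ⟨k, rfl⟩
    obtain ⟨k, hk⟩ := this
    rw [flip_mulVec]
    funext t
    simp only [hv, hk, Sum.elim_inr, WithLp.equiv_apply, Pi.neg_apply]
    exact (mem_skewSub_iff n _).mp (bW k).2 t
end
end

section
/- Let T_n be the n×n lower bidiagonal Toeplitz matrix with 1 on the diagonal and 1 on the first subdiagonal (symbol f(θ) = 1 + e^{iθ}). Then the eigenvalues of the symmetric matrix H_n = Y_n T_n are exactly (−1)^{j+1} · 2cos(jπ/(2n+1)) for j = 1,...,n; in particular the singular values of T_n are 2cos(jπ/(2n+1)), j = 1,...,n. -/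
open Matrix Polynomial Real

lemma H_apply {n : ℕ} (T : Matrix (Fin n) (Fin n) ℝ)
    (hT : ∀ s t : Fin n, T s t =
      if (s : ℕ) = (t : ℕ) ∨ (s : ℕ) = (t : ℕ) + 1 then 1 else 0) (i k : Fin n) :
    (flipMatrix n * T) i k =
      if (i:ℕ)+(k:ℕ)+2 = n+1 ∨ (i:ℕ)+(k:ℕ)+3 = n+1 then 1 else 0 := by
  have hn := i.pos
  have hi := i.isLt
  have hk := k.isLt
  have hrev : n - 1 - (i:ℕ) < n := by omega
  rw [Matrix.mul_apply, Finset.sum_eq_single (⟨n-1-(i:ℕ), hrev⟩ : Fin n)]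
  · have h1 : (i:ℕ) + (n-1-(i:ℕ)) + 2 = n + 1 := by omega
    simp only [flipMatrix, Matrix.of_apply, hT, h1, if_true]
    rw [one_mul]
    have h2 : ((n-1-(i:ℕ) = (k:ℕ)) ∨ (n-1-(i:ℕ) = (k:ℕ)+1)) ↔
        ((i:ℕ)+(k:ℕ)+2 = n+1 ∨ (i:ℕ)+(k:ℕ)+3 = n+1) := by omega
    exact if_congr h2 rfl rfl
  · intro b _ hb
    have h3 : ¬((i:ℕ)+(b:ℕ)+2 = n+1) := by
      intro h
      exact hb (Fin.ext (by simp only []; omega))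
    simp only [flipMatrix, Matrix.of_apply]
    rw [if_neg h3, zero_mul]
  · simp

lemma H_mulVec {n : ℕ} (T : Matrix (Fin n) (Fin n) ℝ)
    (hT : ∀ s t : Fin n, T s t =
      if (s : ℕ) = (t : ℕ) ∨ (s : ℕ) = (t : ℕ) + 1 then 1 else 0)
    (v : Fin n → ℝ) (w : ℕ → ℝ) (hv : ∀ k : Fin n, v k = w (k:ℕ)) (i : Fin n) :
    (flipMatrix n * T).mulVec v i =
      w (n-1-(i:ℕ)) + (if (i:ℕ)+2 ≤ n then w (n-2-(i:ℕ)) else 0) := by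
  have hn := i.pos
  have hi := i.isLt
  have hsplit : ∀ k : Fin n,
      (flipMatrix n * T) i k * v k =
      (if (k:ℕ) = n-1-(i:ℕ) then w (k:ℕ) else 0) +
      (if (k:ℕ) = n-2-(i:ℕ) ∧ (i:ℕ)+2 ≤ n then w (k:ℕ) else 0) := by
    intro k
    have hk := k.isLt
    rw [H_apply T hT]
    by_cases h1 : (k:ℕ) = n-1-(i:ℕ)
    · by_cases h2 : (k:ℕ) = n-2-(i:ℕ) ∧ (i:ℕ)+2 ≤ n
      · exfalso; omega
      · rw [if_pos (by omega), if_pos h1, if_neg h2, hv k]; ring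
    · by_cases h2 : (k:ℕ) = n-2-(i:ℕ) ∧ (i:ℕ)+2 ≤ n
      · rw [if_pos (by omega), if_neg h1, if_pos h2, hv k]; ring
      · rw [if_neg (by omega), if_neg h1, if_neg h2]; ring
  have hrev : n - 1 - (i:ℕ) < n := by omega
  simp only [Matrix.mulVec, dotProduct, hsplit, Finset.sum_add_distrib]
  congr 1
  · have h1 : ∀ k : Fin n, ((k:ℕ) = n-1-(i:ℕ)) = (k = (⟨n-1-(i:ℕ), hrev⟩ : Fin n)) := by
      intro k
      exact propext ⟨fun h => Fin.ext h, fun h => by rw [h]⟩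
    simp only [h1]
    rw [Finset.sum_ite_eq' Finset.univ (⟨n-1-(i:ℕ), hrev⟩ : Fin n) (fun k => w (k:ℕ))]
    simp
  · by_cases h : (i:ℕ)+2 ≤ n
    · have hrev2 : n - 2 - (i:ℕ) < n := by omega
      have h1 : ∀ k : Fin n, ((k:ℕ) = n-2-(i:ℕ) ∧ (i:ℕ)+2 ≤ n) =
          (k = (⟨n-2-(i:ℕ), hrev2⟩ : Fin n)) := by
        intro k
        exact propext ⟨fun hh => Fin.ext hh.1, fun hh => ⟨by rw [hh], h⟩⟩
      simp only [h1]
      rw [Finset.sum_ite_eq' Finset.univ (⟨n-2-(i:ℕ), hrev2⟩ : Fin n) (fun k => w (k:ℕ))]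
      simp [h]
    · simp [h]

lemma real_sin_add_sin (x y : ℝ) :
    Real.sin x + Real.sin y = 2 * Real.sin ((x+y)/2) * Real.cos ((x-y)/2) := by
  have h := Real.sin_sub_sin x (-y)
  rw [Real.sin_neg, sub_neg_eq_add, show x - -y = x + y from by ring,
    show x + -y = x - y from by ring] at h
  exact h

lemma trig_key (n j : ℕ) (x : ℝ) :
    Real.sin (((n:ℝ) - x + 1) * (2*((j:ℝ)+1)*π/(2*(n:ℝ)+1))) +
    Real.sin (((n:ℝ) - x) * (2*((j:ℝ)+1)*π/(2*(n:ℝ)+1))) =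
    ((-1:ℝ)^j * (2 * Real.cos (((j:ℝ)+1)*π/(2*(n:ℝ)+1)))) *
      Real.sin (x * (2*((j:ℝ)+1)*π/(2*(n:ℝ)+1))) := by
  set φ : ℝ := ((j:ℝ)+1)*π/(2*(n:ℝ)+1) with hφdef
  have h2n1 : (2*(n:ℝ)+1) ≠ 0 := by positivity
  have hθ : 2*((j:ℝ)+1)*π/(2*(n:ℝ)+1) = 2*φ := by rw [hφdef]; ring
  have hφ : (2*(n:ℝ)+1)*φ = ((j:ℝ)+1)*π := by rw [hφdef]; field_simp
  rw [hθ, real_sin_add_sin]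
  have e1 : ((((n:ℝ) - x + 1) * (2*φ)) + (((n:ℝ) - x) * (2*φ))) / 2
      = ((j:ℝ)+1)*π - x*(2*φ) := by linear_combination hφ
  have e2 : ((((n:ℝ) - x + 1) * (2*φ)) - (((n:ℝ) - x) * (2*φ))) / 2 = φ := by ring
  rw [e1, e2, Real.sin_sub]
  have hs : Real.sin (((j:ℝ)+1)*π) = 0 := by
    have h := Real.sin_nat_mul_pi (j+1)
    push_cast at h
    exact h
  have hc : Real.cos (((j:ℝ)+1)*π) = (-1:ℝ)^(j+1) := by
    have h := Real.cos_nat_mul_pi_sub 0 (j+1)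
    push_cast at h
    simpa using h
  rw [hs, hc, pow_succ]
  ring

lemma eigen1 {n : ℕ} (T : Matrix (Fin n) (Fin n) ℝ)
    (hT : ∀ s t : Fin n, T s t =
      if (s : ℕ) = (t : ℕ) ∨ (s : ℕ) = (t : ℕ) + 1 then 1 else 0) (j : Fin n) :
    (flipMatrix n * T).mulVec
      (fun k : Fin n => Real.sin ((((k:ℕ):ℝ)+1) * (2*(((j:ℕ):ℝ)+1)*π/(2*(n:ℝ)+1))))
    = ((-1:ℝ)^(j:ℕ) * (2 * Real.cos (((((j:ℕ):ℝ))+1)*π/(2*(n:ℝ)+1)))) •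
      (fun k : Fin n => Real.sin ((((k:ℕ):ℝ)+1) * (2*(((j:ℕ):ℝ)+1)*π/(2*(n:ℝ)+1)))) := by
  funext i
  rw [H_mulVec T hT _
    (fun m : ℕ => Real.sin (((m:ℝ)+1) * (2*(((j:ℕ):ℝ)+1)*π/(2*(n:ℝ)+1)))) (fun k => rfl) i]
  simp only [Pi.smul_apply, smul_eq_mul]
  have hi := i.isLt
  have key := trig_key n (j:ℕ) (((i:ℕ):ℝ)+1)
  by_cases h : (i:ℕ)+2 ≤ n
  · rw [if_pos h]
    obtain ⟨e, he⟩ : ∃ e, n = (i:ℕ)+2+e := ⟨n - (i:ℕ) - 2, by omega⟩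
    have hn1 : n-1-(i:ℕ) = e+1 := by omega
    have hn2 : n-2-(i:ℕ) = e := by omega
    rw [hn1, hn2]
    have hnr : (n:ℝ) = ((i:ℕ):ℝ)+2+(e:ℝ) := by exact_mod_cast congrArg (Nat.cast : ℕ → ℝ) he
    rw [show (n:ℝ) - (((i:ℕ):ℝ)+1) + 1 = ((e:ℕ):ℝ)+1+1 from by linarith,
        show (n:ℝ) - (((i:ℕ):ℝ)+1) = ((e:ℕ):ℝ)+1 from by linarith] at key
    push_cast
    push_cast at key
    linarith [key]
  · rw [if_neg h]
    have hn1 : n-1-(i:ℕ) = 0 := by omega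
    have hn : (n:ℕ) = (i:ℕ)+1 := by omega
    have hnr : (n:ℝ) = ((i:ℕ):ℝ)+1 := by exact_mod_cast congrArg (Nat.cast : ℕ → ℝ) hn
    rw [hn1]
    rw [show (n:ℝ) - (((i:ℕ):ℝ)+1) + 1 = 1 from by linarith,
        show (n:ℝ) - (((i:ℕ):ℝ)+1) = 0 from by linarith, zero_mul, Real.sin_zero] at key
    push_cast
    push_cast at key
    linarith [key]

lemma cos_angle_pos {n : ℕ} (j : Fin n) :
    0 < Real.cos ((((j:ℕ):ℝ)+1)*π/(2*(n:ℝ)+1)) := by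
  have hπ := Real.pi_pos
  have hj : ((j:ℕ):ℝ) + 1 ≤ n := by exact_mod_cast j.isLt
  have hd : (0:ℝ) < 2*(n:ℝ)+1 := by positivity
  apply Real.cos_pos_of_mem_Ioo
  constructor
  · have : (0:ℝ) < (((j:ℕ):ℝ)+1)*π/(2*(n:ℝ)+1) := by positivity
    linarith
  · rw [div_lt_iff₀ hd]
    nlinarith

lemma cos_angle_inj {n : ℕ} (j k : Fin n)
    (h : Real.cos ((((j:ℕ):ℝ)+1)*π/(2*(n:ℝ)+1)) =
         Real.cos ((((k:ℕ):ℝ)+1)*π/(2*(n:ℝ)+1))) : j = k := by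
  have hπ := Real.pi_pos
  have hd : (0:ℝ) < 2*(n:ℝ)+1 := by positivity
  have mem : ∀ l : Fin n, (((l:ℕ):ℝ)+1)*π/(2*(n:ℝ)+1) ∈ Set.Icc 0 π := by
    intro l
    have hl : ((l:ℕ):ℝ) < n := by exact_mod_cast l.isLt
    constructor
    · positivity
    · rw [div_le_iff₀ hd]; nlinarith
  have heq := Real.injOn_cos (mem j) (mem k) h
  field_simp at heq
  exact Fin.ext (by exact_mod_cast (by linarith : ((j:ℕ):ℝ) = ((k:ℕ):ℝ)))

lemma sq_inj_pos {a b : ℝ} (ha : 0 < a) (hb : 0 < b) (h : a^2 = b^2) : a = b := by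
  rcases lt_trichotomy a b with hlt | he | hgt
  · nlinarith
  · exact he
  · nlinarith

lemma flip_transpose (n : ℕ) : (flipMatrix n)ᵀ = flipMatrix n := by
  ext i j
  simp only [flipMatrix, Matrix.transpose_apply, Matrix.of_apply]
  exact if_congr (by omega) rfl rfl

lemma flip_mul_flip (n : ℕ) : flipMatrix n * flipMatrix n = 1 := by
  ext i j
  have hn := i.pos
  have hi := i.isLt
  have hj := j.isLt
  have hrev : n - 1 - (i:ℕ) < n := by omega
  rw [Matrix.mul_apply, Finset.sum_eq_single (⟨n-1-(i:ℕ), hrev⟩ : Fin n)]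
  · have h1 : (i:ℕ) + (n-1-(i:ℕ)) + 2 = n + 1 := by omega
    simp only [flipMatrix, Matrix.of_apply]
    rw [if_pos h1, one_mul, Matrix.one_apply]
    have h2 : ((n-1-(i:ℕ)) + (j:ℕ) + 2 = n+1) ↔ (i = j) := by
      rw [Fin.ext_iff]; omega
    exact if_congr h2 rfl rfl
  · intro b _ hb
    have h3 : ¬((i:ℕ)+(b:ℕ)+2 = n+1) := by
      intro hcon
      exact hb (Fin.ext (by simp only []; omega))
    simp only [flipMatrix, Matrix.of_apply]
    rw [if_neg h3, zero_mul]
  · simp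
lemma charpoly_eval_aux {n : ℕ} (M : Matrix (Fin n) (Fin n) ℝ) (μ : ℝ) :
    M.charpoly.eval μ = (μ • (1 : Matrix (Fin n) (Fin n) ℝ) - M).det := by
  rw [Matrix.charpoly, ← Polynomial.coe_evalRingHom, RingHom.map_det]
  congr 1
  ext i j
  by_cases h : i = j <;>
    simp [Matrix.charmatrix_apply, h, Matrix.one_apply, Matrix.diagonal_apply]

lemma charpoly_eq_prod_of_eigen {n : ℕ} (M : Matrix (Fin n) (Fin n) ℝ)
    (lam : Fin n → ℝ) (hinj : Function.Injective lam)
    (heig : ∀ j : Fin n, ∃ v : Fin n → ℝ, v ≠ 0 ∧ M.mulVec v = lam j • v) :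
    M.charpoly = ∏ j : Fin n, (X - C (lam j)) := by
  set q : ℝ[X] := ∏ j : Fin n, (X - C (lam j)) with hqdef
  have hq : q.Monic := monic_prod_of_monic _ _ fun j _ => monic_X_sub_C _
  have hp := M.charpoly_monic
  have hdp : M.charpoly.natDegree = n := by simpa using M.charpoly_natDegree_eq_dim
  have hdq : q.natDegree = n := by
    simp [hqdef, natDegree_prod_of_monic _ _ fun (j : Fin n) _ => monic_X_sub_C (lam j)]
  have hroot : ∀ j : Fin n, (M.charpoly - q).eval (lam j) = 0 := by
    intro j
    obtain ⟨v, hv0, hv⟩ := heig j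
    have hdet : (lam j • (1 : Matrix (Fin n) (Fin n) ℝ) - M).det = 0 := by
      rw [← Matrix.exists_mulVec_eq_zero_iff]
      refine ⟨v, hv0, ?_⟩
      rw [Matrix.sub_mulVec, Matrix.smul_mulVec, Matrix.one_mulVec, hv, sub_self]
    have hqe : q.eval (lam j) = 0 := by
      rw [hqdef, eval_prod]
      exact Finset.prod_eq_zero (Finset.mem_univ j) (by simp)
    rw [eval_sub, charpoly_eval_aux, hdet, hqe, sub_zero]
  by_cases hne : M.charpoly = q
  · exact hne
  exfalso
  have hsubne : M.charpoly - q ≠ 0 := sub_ne_zero.mpr hne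
  have hdeg : (M.charpoly - q).degree < M.charpoly.degree := by
    refine Polynomial.degree_sub_lt ?_ hp.ne_zero ?_
    · rw [Polynomial.degree_eq_natDegree hp.ne_zero, Polynomial.degree_eq_natDegree hq.ne_zero,
        hdp, hdq]
    · rw [hp.leadingCoeff, hq.leadingCoeff]
  have hlt : (M.charpoly - q).natDegree < n := by
    have := (Polynomial.natDegree_lt_natDegree_iff hsubne).mpr hdeg
    omega
  have := Polynomial.eq_zero_of_natDegree_lt_card_of_eval_eq_zero
    (M.charpoly - q) hinj hroot (by simpa using hlt)
  exact hsubne this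

/-- for the lower bidiagonal Toeplitz matrix `T_n` with `1` on the
diagonal and first subdiagonal (symbol `1 + e^{iθ}`), the eigenvalues of the
symmetric matrix `H_n = Y_n T_n` are exactly `(−1)^{j+1}·2cos(jπ/(2n+1))`,
`j = 1,…,n` (with multiplicity, via the characteristic polynomial); in particular
the singular values of `T_n` are `2cos(jπ/(2n+1))`, `j = 1,…,n`. -/
theorem stmt13 (n : ℕ) (T : Matrix (Fin n) (Fin n) ℝ)
    (hT : ∀ s t : Fin n, T s t =
      if (s : ℕ) = (t : ℕ) ∨ (s : ℕ) = (t : ℕ) + 1 then 1 else 0) :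
    (flipMatrix n * T)ᵀ = flipMatrix n * T ∧
    (flipMatrix n * T).charpoly =
      ∏ j : Fin n, (X - C ((-1 : ℝ) ^ (j : ℕ) *
        (2 * Real.cos ((((j : ℕ) + 1) * π) / (2 * n + 1))))) ∧
    (Tᵀ * T).charpoly =
      ∏ j : Fin n, (X - C ((2 * Real.cos ((((j : ℕ) + 1) * π) / (2 * n + 1))) ^ 2)) := by
  have hsymm : (flipMatrix n * T)ᵀ = flipMatrix n * T := by
    ext i j
    rw [Matrix.transpose_apply, H_apply T hT, H_apply T hT]
    have hi := i.isLt
    have hj := j.isLt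
    exact if_congr (by omega) rfl rfl
  have hvne : ∀ j : Fin n,
      (fun k : Fin n => Real.sin ((((k:ℕ):ℝ)+1) * (2*(((j:ℕ):ℝ)+1)*π/(2*(n:ℝ)+1)))) ≠ 0 := by
    intro j hzero
    have h0 := congrFun hzero ⟨0, j.pos⟩
    have hπ := Real.pi_pos
    have hj : ((j:ℕ):ℝ) + 1 ≤ n := by exact_mod_cast j.isLt
    have hd : (0:ℝ) < 2*(n:ℝ)+1 := by positivity
    have hθpos : 0 < 2*(((j:ℕ):ℝ)+1)*π/(2*(n:ℝ)+1) := by positivity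
    have hθlt : 2*(((j:ℕ):ℝ)+1)*π/(2*(n:ℝ)+1) < π := by
      rw [div_lt_iff₀ hd]; nlinarith
    have hs : 0 < Real.sin (2*(((j:ℕ):ℝ)+1)*π/(2*(n:ℝ)+1)) :=
      Real.sin_pos_of_pos_of_lt_pi hθpos hθlt
    simp only [Pi.zero_apply] at h0
    rw [show ((((0:ℕ):ℝ))+1) = (1:ℝ) from by norm_num, one_mul] at h0
    linarith [hs, h0.le, h0.ge]
  refine ⟨hsymm, ?_, ?_⟩
  · apply charpoly_eq_prod_of_eigen
    · intro j k h
      have hj := cos_angle_pos j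
      have hk := cos_angle_pos k
      have habs := congrArg abs h
      simp only [abs_mul, abs_pow, abs_neg, abs_one, one_pow, one_mul, abs_two] at habs
      rw [abs_of_pos hj, abs_of_pos hk] at habs
      exact cos_angle_inj j k (by linarith)
    · intro j
      exact ⟨_, hvne j, eigen1 T hT j⟩
  · have hTT : (flipMatrix n * T) * (flipMatrix n * T) = Tᵀ * T := by
      nth_rewrite 1 [← hsymm]
      rw [Matrix.transpose_mul, flip_transpose, Matrix.mul_assoc,
        ← Matrix.mul_assoc (flipMatrix n), flip_mul_flip, Matrix.one_mul]
    rw [← hTT]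
    apply charpoly_eq_prod_of_eigen
    · intro j k h
      have hj := cos_angle_pos j
      have hk := cos_angle_pos k
      have h2 := sq_inj_pos (by linarith) (by linarith) h
      exact cos_angle_inj j k (by linarith)
    · intro j
      refine ⟨_, hvne j, ?_⟩
      rw [← Matrix.mulVec_mulVec, eigen1 T hT j, Matrix.mulVec_smul, eigen1 T hT j,
        smul_smul]
      congr 1
      have h1 : ((-1:ℝ)^(j:ℕ))*((-1:ℝ)^(j:ℕ)) = 1 := by
        rw [← pow_add]
        exact Even.neg_one_pow ⟨(j:ℕ), rfl⟩
      linear_combination (2 * Real.cos (((((j:ℕ):ℝ))+1)*π/(2*(n:ℝ)+1)))^2 * h1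
end

section
/- Let T_n be the n×n lower bidiagonal Toeplitz matrix with 1 on the diagonal and −1 on the first subdiagonal (symbol f(θ) = 1 − e^{iθ}). Then the eigenvalues of the symmetric matrix H_n = Y_n T_n are exactly (−1)^{j+1} · 2sin((j−1/2)π/(2n+1)) for j = 1,...,n; in particular the singular values of T_n are 2sin((j−1/2)π/(2n+1)), j = 1,...,n. -/
open Matrix Polynomial Real

namespace Stmt14Aux

lemma flip_mulVec {n : ℕ} (w : Fin n → ℝ) (i : Fin n) :
    (flipMatrix n).mulVec w i = w i.rev := by
  unfold flipMatrix Matrix.mulVec dotProduct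
  rw [Finset.sum_eq_single i.rev]
  · have h : (i : ℕ) + (i.rev : ℕ) + 2 = n + 1 := by
      have := i.isLt; rw [Fin.val_rev]; omega
    show (if (i : ℕ) + (i.rev : ℕ) + 2 = n + 1 then (1:ℝ) else 0) * w i.rev = w i.rev
    rw [if_pos h, one_mul]
  · intro k _ hk
    have h : ¬ ((i : ℕ) + (k : ℕ) + 2 = n + 1) := by
      intro h; apply hk; apply Fin.ext; rw [Fin.val_rev]
      have := i.isLt; have := k.isLt; omega
    show (if (i : ℕ) + (k : ℕ) + 2 = n + 1 then (1:ℝ) else 0) * w k = 0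
    rw [if_neg h, zero_mul]
  · intro h; exact absurd (Finset.mem_univ _) h

lemma flip_mul_apply {n : ℕ} (M : Matrix (Fin n) (Fin n) ℝ) (i j : Fin n) :
    (flipMatrix n * M) i j = M i.rev j := by
  rw [Matrix.mul_apply, Finset.sum_eq_single i.rev]
  · have h : (i : ℕ) + (i.rev : ℕ) + 2 = n + 1 := by
      have := i.isLt; rw [Fin.val_rev]; omega
    show (if (i : ℕ) + (i.rev : ℕ) + 2 = n + 1 then (1:ℝ) else 0) * M i.rev j = M i.rev j
    rw [if_pos h, one_mul]
  · intro k _ hk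
    have h : ¬ ((i : ℕ) + (k : ℕ) + 2 = n + 1) := by
      intro h; apply hk; apply Fin.ext; rw [Fin.val_rev]
      have := i.isLt; have := k.isLt; omega
    show (if (i : ℕ) + (k : ℕ) + 2 = n + 1 then (1:ℝ) else 0) * M k j = 0
    rw [if_neg h, zero_mul]
  · intro h; exact absurd (Finset.mem_univ _) h

lemma flip_mul_flip {n : ℕ} : flipMatrix n * flipMatrix n = 1 := by
  ext i j
  rw [flip_mul_apply]
  have := i.isLt; have := j.isLt
  rcases eq_or_ne i j with rfl | hne
  · have h : (i.rev : ℕ) + (i : ℕ) + 2 = n + 1 := by rw [Fin.val_rev]; omega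
    show (if (i.rev : ℕ) + (i : ℕ) + 2 = n + 1 then (1:ℝ) else 0) = (1 : Matrix (Fin n) (Fin n) ℝ) i i
    rw [if_pos h, Matrix.one_apply_eq]
  · have h : ¬ ((i.rev : ℕ) + (j : ℕ) + 2 = n + 1) := by
      rw [Fin.val_rev]; intro h; apply hne; apply Fin.ext; omega
    show (if (i.rev : ℕ) + (j : ℕ) + 2 = n + 1 then (1:ℝ) else 0) = (1 : Matrix (Fin n) (Fin n) ℝ) i j
    rw [if_neg h, Matrix.one_apply_ne hne]

lemma flip_transpose {n : ℕ} : (flipMatrix n)ᵀ = flipMatrix n := by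
  ext i j
  show (if (j : ℕ) + (i : ℕ) + 2 = n + 1 then (1:ℝ) else 0) =
    (if (i : ℕ) + (j : ℕ) + 2 = n + 1 then (1:ℝ) else 0)
  rw [Nat.add_comm (j : ℕ) (i : ℕ)]

lemma T_mulVec {n : ℕ} (T : Matrix (Fin n) (Fin n) ℝ)
    (hT : ∀ s t : Fin n, T s t =
      if (s : ℕ) = (t : ℕ) then 1 else if (s : ℕ) = (t : ℕ) + 1 then -1 else 0)
    (V : ℕ → ℝ) (hV0 : V 0 = 0) (s : Fin n) :
    T.mulVec (fun i => V ((i : ℕ) + 1)) s = V ((s : ℕ) + 1) - V (s : ℕ) := by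
  unfold Matrix.mulVec dotProduct
  have hsplit : ∀ k ∈ (Finset.univ : Finset (Fin n)), T s k * V ((k : ℕ) + 1) =
      (if s = k then V ((k : ℕ) + 1) else 0) -
      (if (s : ℕ) = (k : ℕ) + 1 then V ((k : ℕ) + 1) else 0) := by
    intro k _
    rw [hT]
    rcases eq_or_ne s k with rfl | hne
    · have h2 : ¬ ((s : ℕ) = (s : ℕ) + 1) := by omega
      simp [h2]
    · have h1 : ¬ ((s : ℕ) = (k : ℕ)) := fun h => hne (Fin.ext h)
      simp only [h1, if_false, if_neg hne]
      split_ifs <;> ring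
  rw [Finset.sum_congr rfl hsplit, Finset.sum_sub_distrib]
  congr 1
  · rw [Finset.sum_ite_eq]; simp
  · rcases Nat.eq_zero_or_pos (s : ℕ) with h0 | hpos
    · rw [h0, hV0, Finset.sum_eq_zero]
      intro k _
      have : ¬ ((s : ℕ) = (k : ℕ) + 1) := by omega
      simp [this]
    · have hm : (s : ℕ) - 1 < n := by have := s.isLt; omega
      rw [Finset.sum_eq_single (⟨(s : ℕ) - 1, hm⟩ : Fin n)]
      · have h : (s : ℕ) = ((⟨(s : ℕ) - 1, hm⟩ : Fin n) : ℕ) + 1 := by simp; omega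
        rw [if_pos h]
        congr 1
        simp; omega
      · intro k _ hk
        have h : ¬ ((s : ℕ) = (k : ℕ) + 1) := by
          intro h; apply hk; apply Fin.ext; simp; omega
        simp [h]
      · intro h; exact absurd (Finset.mem_univ _) h

lemma cos_nat_pi (j : ℕ) : Real.cos (j * π) = (-1) ^ j := by
  have := Real.cos_nat_mul_pi_sub 0 j
  simpa using this

lemma key (n m j : ℕ) (hm : m < n) :
    Real.sin (2 * ((n : ℝ) - m) * (((2 * j + 1) * π) / (2 * (2 * n + 1)))) -
      Real.sin (2 * ((n : ℝ) - 1 - m) * (((2 * j + 1) * π) / (2 * (2 * n + 1)))) =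
    (-1 : ℝ) ^ j * (2 * Real.sin (((2 * j + 1) * π) / (2 * (2 * n + 1)))) *
      Real.sin (2 * ((m : ℝ) + 1) * (((2 * j + 1) * π) / (2 * (2 * n + 1)))) := by
  set a : ℝ := ((2 * j + 1) * π) / (2 * (2 * n + 1)) with ha
  set c : ℝ := (j : ℝ) * π + π / 2 with hc
  set x : ℝ := (2 * (m : ℝ) + 2) * a with hx
  have hden : (2 * (2 * (n : ℝ) + 1)) ≠ 0 := by positivity
  have hNa : (2 * (n : ℝ) + 1) * a = (2 * (j : ℝ) + 1) * (π / 2) := by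
    rw [ha]; field_simp
  have hcc : (2 * (j : ℝ) + 1) * (π / 2) = c := by rw [hc]; ring
  have e1 : 2 * ((n : ℝ) - m) * a = c - (x - a) := by
    rw [hx, ← hcc]; linear_combination hNa
  have e2 : 2 * ((n : ℝ) - 1 - m) * a = c - (x + a) := by
    rw [hx, ← hcc]; linear_combination hNa
  have hsc : Real.sin c = (-1) ^ j := by
    rw [hc, Real.sin_add, Real.sin_pi_div_two, Real.cos_pi_div_two, cos_nat_pi, Real.sin_nat_mul_pi]
    ring
  have hcc2 : Real.cos c = 0 := by
    rw [hc, Real.cos_add, Real.sin_pi_div_two, Real.cos_pi_div_two, Real.sin_nat_mul_pi]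
    ring
  rw [e1, e2, Real.sin_sub c (x - a), Real.sin_sub c (x + a), hsc, hcc2,
    Real.cos_sub, Real.cos_add, Real.sin_sub, Real.sin_add,
    show 2 * ((m : ℝ) + 1) * a = x from by rw [hx]; ring]
  ring

-- the eigenvector for index j
noncomputable def evec (n : ℕ) (j : Fin n) : Fin n → ℝ :=
  fun i => Real.sin (2 * (((i : ℕ) + 1 : ℕ) : ℝ) *
    (((2 * (j : ℕ) + 1) * π) / (2 * (2 * (n : ℕ) + 1))))

lemma eigenH {n : ℕ} (T : Matrix (Fin n) (Fin n) ℝ)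
    (hT : ∀ s t : Fin n, T s t =
      if (s : ℕ) = (t : ℕ) then 1 else if (s : ℕ) = (t : ℕ) + 1 then -1 else 0)
    (j : Fin n) :
    (flipMatrix n * T).mulVec (evec n j) =
      ((-1 : ℝ) ^ (j : ℕ) * (2 * Real.sin (((2 * (j : ℕ) + 1) * π) / (2 * (2 * n + 1))))) •
        evec n j := by
  set a : ℝ := ((2 * (j : ℕ) + 1) * π) / (2 * (2 * (n : ℕ) + 1)) with ha
  funext i
  have hi := i.isLt
  rw [← Matrix.mulVec_mulVec, flip_mulVec]
  have hV : (flipMatrix n * T) = (flipMatrix n * T) := rfl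
  have hTm : T.mulVec (fun i : Fin n => (fun k : ℕ => Real.sin (2 * (k : ℝ) * a)) ((i : ℕ) + 1)) i.rev
      = Real.sin (2 * (((i.rev : ℕ) + 1 : ℕ) : ℝ) * a) - Real.sin (2 * ((i.rev : ℕ) : ℝ) * a) := by
    rw [T_mulVec T hT (fun k : ℕ => Real.sin (2 * (k : ℝ) * a)) (by simp) i.rev]
  have huv : (evec n j) = fun i : Fin n => (fun k : ℕ => Real.sin (2 * (k : ℝ) * a)) ((i : ℕ) + 1) := by
    funext i'; simp [evec, ha]
  rw [huv, hTm]
  have h1 : (((i.rev : ℕ) + 1 : ℕ) : ℝ) = (n : ℝ) - (i : ℕ) := by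
    rw [Fin.val_rev]
    have : n - ((i : ℕ) + 1) + 1 = n - (i : ℕ) := by omega
    rw [this, Nat.cast_sub (by omega)]
  have h2 : ((i.rev : ℕ) : ℝ) = (n : ℝ) - 1 - (i : ℕ) := by
    rw [Fin.val_rev, Nat.cast_sub (by omega)]
    push_cast; ring
  rw [h1, h2]
  have := key n (i : ℕ) (j : ℕ) hi
  rw [← ha] at this
  rw [this]
  simp only [Pi.smul_apply, smul_eq_mul]
  push_cast
  ring_nf

lemma evec_ne_zero {n : ℕ} (j : Fin n) : evec n j ≠ 0 := by
  have hn : 0 < n := j.pos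
  intro h
  have h0 : evec n j ⟨0, hn⟩ = 0 := by rw [h]; rfl
  have hj := j.isLt
  set a : ℝ := ((2 * (j : ℕ) + 1) * π) / (2 * (2 * (n : ℕ) + 1)) with ha
  have hval : evec n j ⟨0, hn⟩ = Real.sin (2 * a) := by
    simp [evec, ha]
  have hpos : 0 < Real.sin (2 * a) := by
    apply Real.sin_pos_of_pos_of_lt_pi
    · rw [ha]; positivity
    · have e : 2 * a = ((2 * (j : ℕ) + 1 : ℝ) / (2 * (n : ℕ) + 1)) * π := by
        rw [ha]; field_simp
      rw [e]
      have hlt : ((2 * (j : ℕ) + 1 : ℝ) / (2 * (n : ℕ) + 1)) < 1 := by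
        rw [div_lt_one (by positivity)]
        have : 2 * (j : ℕ) + 1 < 2 * n + 1 := by omega
        exact_mod_cast this
      calc ((2 * (j : ℕ) + 1 : ℝ) / (2 * (n : ℕ) + 1)) * π < 1 * π :=
            mul_lt_mul_of_pos_right hlt Real.pi_pos
        _ = π := one_mul π
  rw [hval] at h0
  linarith

-- positivity and monotonicity of sin of the angles
lemma sin_ang_pos {n : ℕ} (j : Fin n) :
    0 < Real.sin (((2 * (j : ℕ) + 1) * π) / (2 * (2 * n + 1))) := by
  have hj := j.isLt
  apply Real.sin_pos_of_pos_of_lt_pi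
  · positivity
  · have e : ((2 * (j : ℕ) + 1) * π) / (2 * (2 * n + 1))
        = ((2 * (j : ℕ) + 1 : ℝ) / (2 * (2 * (n : ℕ) + 1))) * π := by ring
    rw [e]
    have hlt : ((2 * (j : ℕ) + 1 : ℝ) / (2 * (2 * (n : ℕ) + 1))) < 1 := by
      rw [div_lt_one (by positivity)]
      have : 2 * (j : ℕ) + 1 < 2 * (2 * n + 1) := by omega
      exact_mod_cast this
    calc ((2 * (j : ℕ) + 1 : ℝ) / (2 * (2 * (n : ℕ) + 1))) * π < 1 * π :=
          mul_lt_mul_of_pos_right hlt Real.pi_pos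
      _ = π := one_mul π

lemma sin_ang_lt {n : ℕ} (j k : Fin n) (hjk : (j : ℕ) < (k : ℕ)) :
    Real.sin (((2 * (j : ℕ) + 1) * π) / (2 * (2 * n + 1))) <
      Real.sin (((2 * (k : ℕ) + 1) * π) / (2 * (2 * n + 1))) := by
  have hj := j.isLt; have hk := k.isLt
  have hmem : ∀ m : Fin n, ((2 * (m : ℕ) + 1) * π) / (2 * (2 * n + 1)) ∈
      Set.Icc (-(π / 2)) (π / 2) := by
    intro m
    have hm := m.isLt
    constructor
    · have : (0 : ℝ) ≤ ((2 * (m : ℕ) + 1) * π) / (2 * (2 * n + 1)) := by positivity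
      have := Real.pi_pos
      linarith
    · rw [div_le_iff₀ (by positivity)]
      have hle : (2 * (m : ℕ) + 1 : ℝ) ≤ (2 * (n : ℕ) + 1) := by
        have : 2 * (m : ℕ) + 1 ≤ 2 * n + 1 := by omega
        exact_mod_cast this
      have := Real.pi_pos
      nlinarith
  apply Real.strictMonoOn_sin (hmem j) (hmem k)
  apply (div_lt_div_iff_of_pos_right (by positivity)).mpr
  have hlt : (2 * (j : ℕ) + 1 : ℝ) < (2 * (k : ℕ) + 1) := by
    have : 2 * (j : ℕ) + 1 < 2 * (k : ℕ) + 1 := by omega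
    exact_mod_cast this
  exact mul_lt_mul_of_pos_right hlt Real.pi_pos

-- charpoly eval lemma
lemma charpoly_eval {n : ℕ} (M : Matrix (Fin n) (Fin n) ℝ) (μ : ℝ) :
    M.charpoly.eval μ = (Matrix.diagonal (fun _ : Fin n => μ) - M).det := by
  rw [Matrix.charpoly, show Polynomial.eval μ (Matrix.charmatrix M).det
      = (Polynomial.evalRingHom μ) (Matrix.charmatrix M).det from rfl, RingHom.map_det]
  congr 1
  ext i j
  rcases eq_or_ne i j with rfl | hne
  · simp [Matrix.charmatrix_apply_eq]
  · simp [Matrix.charmatrix_apply_ne _ _ _ hne, Matrix.diagonal_apply_ne _ hne]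

lemma isRoot_charpoly {n : ℕ} (M : Matrix (Fin n) (Fin n) ℝ) (μ : ℝ) (v : Fin n → ℝ)
    (hv : v ≠ 0) (h : M.mulVec v = μ • v) : M.charpoly.IsRoot μ := by
  rw [Polynomial.IsRoot, charpoly_eval]
  rw [← Matrix.exists_mulVec_eq_zero_iff]
  refine ⟨v, hv, ?_⟩
  rw [Matrix.sub_mulVec, h]
  have : (Matrix.diagonal (fun _ : Fin n => μ)).mulVec v = μ • v := by
    ext i; simp [Matrix.mulVec_diagonal]
  rw [this, sub_self]

lemma charpoly_eq_prod {n : ℕ} (M : Matrix (Fin n) (Fin n) ℝ) (f : Fin n → ℝ)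
    (hinj : Function.Injective f) (hroot : ∀ j, M.charpoly.IsRoot (f j)) :
    M.charpoly = ∏ j, (X - C (f j)) := by
  symm
  have hmonic : (∏ j, (X - C (f j))).Monic :=
    Polynomial.monic_prod_of_monic _ _ fun j _ => Polynomial.monic_X_sub_C _
  apply Polynomial.eq_of_dvd_of_natDegree_le_of_leadingCoeff
  · -- dvd
    have hle : (Finset.univ.val.map f) ≤ M.charpoly.roots := by
      rw [Multiset.le_iff_count]
      intro a
      have hnodup : (Finset.univ.val.map f).Nodup :=
        Finset.univ.nodup.map hinj
      by_cases hmem : a ∈ Finset.univ.val.map f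
      · have h1 : (Finset.univ.val.map f).count a = 1 :=
          Multiset.count_eq_one_of_mem hnodup hmem
      -- a is a root
        obtain ⟨j, _, rfl⟩ := Multiset.mem_map.mp hmem
        have : f j ∈ M.charpoly.roots := by
          rw [Polynomial.mem_roots (M.charpoly_monic.ne_zero)]
          exact hroot j
        rw [h1]
        exact Multiset.one_le_count_iff_mem.mpr this
      · rw [Multiset.count_eq_zero_of_notMem hmem]
        exact Nat.zero_le _
    calc (∏ j, (X - C (f j)))
        = ((Finset.univ.val.map f).map (fun a => X - C a)).prod := by
          rw [Finset.prod_eq_multiset_prod, Multiset.map_map]; rfl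
      _ ∣ (M.charpoly.roots.map (fun a => X - C a)).prod :=
          Multiset.prod_dvd_prod_of_le (Multiset.map_le_map hle)
      _ ∣ M.charpoly := M.charpoly.prod_multiset_X_sub_C_dvd
  · -- degrees
    rw [Matrix.charpoly_natDegree_eq_dim, Polynomial.natDegree_prod]
    · simp [Polynomial.natDegree_X_sub_C, Fintype.card_fin]
    · intro j _; exact Polynomial.X_sub_C_ne_zero _
  · rw [hmonic.leadingCoeff, M.charpoly_monic.leadingCoeff]


lemma sym_part {n : ℕ} (T : Matrix (Fin n) (Fin n) ℝ)
    (hT : ∀ s t : Fin n, T s t =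
      if (s : ℕ) = (t : ℕ) then 1 else if (s : ℕ) = (t : ℕ) + 1 then -1 else 0) :
    (flipMatrix n * T)ᵀ = flipMatrix n * T := by
  ext i j
  rw [Matrix.transpose_apply, flip_mul_apply, flip_mul_apply, hT, hT]
  have hi := i.isLt
  have hj := j.isLt
  have hri : (i.rev : ℕ) = n - ((i : ℕ) + 1) := Fin.val_rev i
  have hrj : (j.rev : ℕ) = n - ((j : ℕ) + 1) := Fin.val_rev j
  split_ifs <;> first | rfl | (exfalso; omega)

lemma TtT_eq {n : ℕ} (T : Matrix (Fin n) (Fin n) ℝ)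
    (hT : ∀ s t : Fin n, T s t =
      if (s : ℕ) = (t : ℕ) then 1 else if (s : ℕ) = (t : ℕ) + 1 then -1 else 0) :
    Tᵀ * T = (flipMatrix n * T) * (flipMatrix n * T) := by
  calc Tᵀ * T = Tᵀ * ((flipMatrix n * flipMatrix n) * T) := by rw [flip_mul_flip, one_mul]
    _ = (Tᵀ * (flipMatrix n)ᵀ) * (flipMatrix n * T) := by
        rw [flip_transpose, Matrix.mul_assoc, Matrix.mul_assoc]
    _ = (flipMatrix n * T)ᵀ * (flipMatrix n * T) := by rw [Matrix.transpose_mul]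
    _ = (flipMatrix n * T) * (flipMatrix n * T) := by rw [sym_part T hT]

lemma eigenTtT {n : ℕ} (T : Matrix (Fin n) (Fin n) ℝ)
    (hT : ∀ s t : Fin n, T s t =
      if (s : ℕ) = (t : ℕ) then 1 else if (s : ℕ) = (t : ℕ) + 1 then -1 else 0)
    (j : Fin n) :
    (Tᵀ * T).mulVec (evec n j) =
      ((2 * Real.sin (((2 * (j : ℕ) + 1) * π) / (2 * (2 * n + 1)))) ^ 2) • evec n j := by
  rw [TtT_eq T hT, ← Matrix.mulVec_mulVec, eigenH T hT, Matrix.mulVec_smul, eigenH T hT,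
    smul_smul]
  congr 1
  have h1 : ((-1 : ℝ) ^ (j : ℕ)) * ((-1 : ℝ) ^ (j : ℕ)) = 1 := by
    rw [← pow_add]
    exact Even.neg_one_pow ⟨(j : ℕ), rfl⟩
  nlinarith [h1]

end Stmt14Aux

/-- for the lower bidiagonal Toeplitz matrix `T_n` with `1` on the
diagonal and `−1` on the first subdiagonal (symbol `1 − e^{iθ}`), the eigenvalues
of `H_n = Y_n T_n` are exactly `(−1)^{j+1}·2sin((j−1/2)π/(2n+1))`, `j = 1,…,n`
(via the characteristic polynomial); in particular the singular values of `T_n`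
are `2sin((j−1/2)π/(2n+1))`. -/
theorem stmt14 (n : ℕ) (T : Matrix (Fin n) (Fin n) ℝ)
    (hT : ∀ s t : Fin n, T s t =
      if (s : ℕ) = (t : ℕ) then 1 else if (s : ℕ) = (t : ℕ) + 1 then -1 else 0) :
    (flipMatrix n * T)ᵀ = flipMatrix n * T ∧
    (flipMatrix n * T).charpoly =
      ∏ j : Fin n, (X - C ((-1 : ℝ) ^ (j : ℕ) *
        (2 * Real.sin (((2 * (j : ℕ) + 1) * π) / (2 * (2 * n + 1)))))) ∧
    (Tᵀ * T).charpoly =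
      ∏ j : Fin n, (X - C ((2 * Real.sin (((2 * (j : ℕ) + 1) * π) / (2 * (2 * n + 1)))) ^ 2)) := by
  refine ⟨Stmt14Aux.sym_part T hT, ?_, ?_⟩
  · apply Stmt14Aux.charpoly_eq_prod (flipMatrix n * T)
      (fun j : Fin n => (-1 : ℝ) ^ (j : ℕ) *
        (2 * Real.sin (((2 * (j : ℕ) + 1) * π) / (2 * (2 * n + 1)))))
    · intro j k h
      dsimp only at h
      by_contra hne
      have habs := congrArg abs h
      simp only [abs_mul, abs_pow, abs_neg, abs_one, one_pow, one_mul, abs_two,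
        abs_of_pos (Stmt14Aux.sin_ang_pos j), abs_of_pos (Stmt14Aux.sin_ang_pos k)] at habs
      rcases lt_trichotomy (j : ℕ) (k : ℕ) with hlt | heq | hgt
      · have := Stmt14Aux.sin_ang_lt j k hlt
        linarith
      · exact hne (Fin.ext heq)
      · have := Stmt14Aux.sin_ang_lt k j hgt
        linarith
    · intro j
      exact Stmt14Aux.isRoot_charpoly _ _ (Stmt14Aux.evec n j) (Stmt14Aux.evec_ne_zero j)
        (Stmt14Aux.eigenH T hT j)
  · apply Stmt14Aux.charpoly_eq_prod (Tᵀ * T)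
      (fun j : Fin n => (2 * Real.sin (((2 * (j : ℕ) + 1) * π) / (2 * (2 * n + 1)))) ^ 2)
    · intro j k h
      dsimp only at h
      by_contra hne
      rcases lt_trichotomy (j : ℕ) (k : ℕ) with hlt | heq | hgt
      · have h1 := Stmt14Aux.sin_ang_lt j k hlt
        have h2 := Stmt14Aux.sin_ang_pos j
        nlinarith [h]
      · exact hne (Fin.ext heq)
      · have h1 := Stmt14Aux.sin_ang_lt k j hgt
        have h2 := Stmt14Aux.sin_ang_pos k
        nlinarith [h]
    · intro j
      exact Stmt14Aux.isRoot_charpoly _ _ (Stmt14Aux.evec n j) (Stmt14Aux.evec_ne_zero j)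
        (Stmt14Aux.eigenTtT T hT j)
end

section
/- Let g_n : [0,1] → ℝ be a sequence of non-decreasing functions and g : (0,1) → ℝ non-decreasing, and let ω_n → ∞ be positive integers such that for every continuous compactly supported F : ℝ → ℝ, (1/ω_n) Σ_{ℓ=0}^{ω_n} F(g_n(ℓ/ω_n)) → ∫_0^1 F(g(y)) dy. Then g_n(y) → g(y) at every continuity point y ∈ (0,1) of g. -/
open Filter Topology MeasureTheory

noncomputable def trap (A B δ t : ℝ) : ℝ :=
  max 0 (min (min 1 ((t - A)/δ + 1)) ((B - t)/δ + 1))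

lemma trap_cont (A B δ : ℝ) : Continuous (trap A B δ) := by
  unfold trap; fun_prop

lemma trap_nonneg (A B δ t : ℝ) : 0 ≤ trap A B δ t := le_max_left _ _

lemma trap_le_one (A B δ t : ℝ) : trap A B δ t ≤ 1 :=
  max_le zero_le_one ((min_le_left _ _).trans (min_le_left _ _))

lemma trap_eq_one {A B δ t : ℝ} (hδ : 0 < δ) (h1 : A ≤ t) (h2 : t ≤ B) :
    trap A B δ t = 1 := by
  have h1' : (1:ℝ) ≤ (t - A)/δ + 1 := by
    have : 0 ≤ (t - A)/δ := div_nonneg (by linarith) hδ.le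
    linarith
  have h2' : (1:ℝ) ≤ (B - t)/δ + 1 := by
    have : 0 ≤ (B - t)/δ := div_nonneg (by linarith) hδ.le
    linarith
  unfold trap
  rw [min_eq_left h1', min_eq_left h2', max_eq_right zero_le_one]

lemma trap_eq_zero_left {A B δ t : ℝ} (hδ : 0 < δ) (h : t ≤ A - δ) :
    trap A B δ t = 0 := by
  have h1 : (t - A)/δ + 1 ≤ 0 := by
    have : (t - A)/δ ≤ -1 := by
      rw [div_le_iff₀ hδ]; linarith
    linarith
  have : min (min 1 ((t - A)/δ + 1)) ((B - t)/δ + 1) ≤ 0 :=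
    ((min_le_left _ _).trans (min_le_right _ _)).trans h1
  unfold trap
  exact max_eq_left this

lemma trap_eq_zero_right {A B δ t : ℝ} (hδ : 0 < δ) (h : B + δ ≤ t) :
    trap A B δ t = 0 := by
  have h1 : (B - t)/δ + 1 ≤ 0 := by
    have : (B - t)/δ ≤ -1 := by
      rw [div_le_iff₀ hδ]; linarith
    linarith
  have : min (min 1 ((t - A)/δ + 1)) ((B - t)/δ + 1) ≤ 0 :=
    (min_le_right _ _).trans h1
  unfold trap
  exact max_eq_left this

lemma trap_support {A B δ : ℝ} (hδ : 0 < δ) : HasCompactSupport (trap A B δ) := by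
  apply HasCompactSupport.intro (isCompact_Icc (a := A - δ) (b := B + δ))
  intro t ht
  simp only [Set.mem_Icc, not_and_or, not_le] at ht
  rcases ht with h | h
  · exact trap_eq_zero_left hδ h.le
  · exact trap_eq_zero_right hδ h.le

lemma trap_integral_lb {G : ℝ → ℝ} (hG : MonotoneOn G (Set.Ioo (0:ℝ) 1))
    {A B δ a b : ℝ} (hδ : 0 < δ) (hab : 0 ≤ a) (hab2 : a ≤ b) (hb1 : b ≤ 1)
    (hone : ∀ x ∈ Set.Ioo a b, trap A B δ (G x) = 1) :
    b - a ≤ ∫ x in Set.Ioo (0:ℝ) 1, trap A B δ (G x) := by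
  have hmeas : AEMeasurable G (volume.restrict (Set.Ioo (0:ℝ) 1)) :=
    aemeasurable_restrict_of_monotoneOn measurableSet_Ioo hG
  have hmeasF : AEStronglyMeasurable (fun x => trap A B δ (G x))
      (volume.restrict (Set.Ioo (0:ℝ) 1)) :=
    ((trap_cont A B δ).measurable.comp_aemeasurable hmeas).aestronglyMeasurable
  have hfin : IsFiniteMeasure (volume.restrict (Set.Ioo (0:ℝ) 1)) := by
    constructor
    rw [Measure.restrict_apply_univ, Real.volume_Ioo]
    exact ENNReal.ofReal_lt_top
  have hint : IntegrableOn (fun x => trap A B δ (G x)) (Set.Ioo (0:ℝ) 1) := by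
    apply Integrable.mono' (integrable_const 1) hmeasF
    filter_upwards with x
    rw [Real.norm_eq_abs, abs_of_nonneg (trap_nonneg _ _ _ _)]
    exact trap_le_one _ _ _ _
  have hsub : Set.Ioo a b ⊆ Set.Ioo (0:ℝ) 1 :=
    Set.Ioo_subset_Ioo hab hb1
  calc b - a = ∫ x in Set.Ioo a b, (1:ℝ) := by
        rw [setIntegral_const, Real.volume_real_Ioo_of_le hab2, smul_eq_mul, mul_one]
    _ = ∫ x in Set.Ioo a b, trap A B δ (G x) :=
        (setIntegral_congr_fun measurableSet_Ioo fun x hx => (hone x hx).symm)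
    _ ≤ ∫ x in Set.Ioo (0:ℝ) 1, trap A B δ (G x) := by
        apply setIntegral_mono_set hint
        · filter_upwards with x using trap_nonneg _ _ _ _
        · exact HasSubset.Subset.eventuallyLE hsub

lemma sum_le_count_upper (ω : ℕ) (y : ℝ) (hy0 : 0 ≤ y) (f : ℕ → ℝ)
    (h1 : ∀ ℓ, f ℓ ≤ 1)
    (hz : ∀ ℓ ≤ ω, y * ω ≤ (ℓ:ℝ) → f ℓ = 0) :
    ∑ ℓ ∈ Finset.range (ω+1), f ℓ ≤ y * ω + 1 := by
  have hfloor : ((⌊y * (ω:ℝ)⌋₊ : ℝ)) ≤ y * ω :=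
    Nat.floor_le (mul_nonneg hy0 (Nat.cast_nonneg _))
  calc ∑ ℓ ∈ Finset.range (ω+1), f ℓ
      ≤ ∑ ℓ ∈ Finset.range (ω+1), (if (ℓ:ℝ) < y*ω then (1:ℝ) else 0) := by
        apply Finset.sum_le_sum
        intro ℓ hℓ
        split_ifs with h
        · exact h1 ℓ
        · push_neg at h
          rw [hz ℓ (Nat.lt_succ_iff.1 (Finset.mem_range.1 hℓ)) h]
    _ = (((Finset.range (ω+1)).filter (fun ℓ : ℕ => (ℓ:ℝ) < y*ω)).card : ℝ) := by
        rw [Finset.sum_boole]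
    _ ≤ ((⌊y * (ω:ℝ)⌋₊ + 1 : ℕ) : ℝ) := by
        have hsub : (Finset.range (ω+1)).filter (fun ℓ : ℕ => (ℓ:ℝ) < y*ω) ⊆
            Finset.range (⌊y * (ω:ℝ)⌋₊ + 1) := by
          intro ℓ hℓ
          rw [Finset.mem_filter] at hℓ
          rw [Finset.mem_range, Nat.lt_succ_iff]
          exact Nat.le_floor hℓ.2.le
        have := Finset.card_le_card hsub
        rw [Finset.card_range] at this
        exact_mod_cast this
    _ ≤ y * ω + 1 := by push_cast; linarith

lemma sum_le_count_lower (ω : ℕ) (y : ℝ) (hy0 : 0 ≤ y) (hy1 : y ≤ 1) (f : ℕ → ℝ)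
    (h1 : ∀ ℓ, f ℓ ≤ 1)
    (hz : ∀ ℓ ≤ ω, (ℓ:ℝ) ≤ y * ω → f ℓ = 0) :
    ∑ ℓ ∈ Finset.range (ω+1), f ℓ ≤ (1-y) * ω + 1 := by
  have hfl : ⌊y * (ω:ℝ)⌋₊ ≤ ω := by
    have h : y * (ω:ℝ) ≤ ((ω:ℕ):ℝ) := by nlinarith [Nat.cast_nonneg (α := ℝ) ω]
    calc ⌊y * (ω:ℝ)⌋₊ ≤ ⌊((ω:ℕ):ℝ)⌋₊ := Nat.floor_le_floor h
      _ = ω := Nat.floor_natCast ω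
  have hfloor : y * (ω:ℝ) - 1 < (⌊y * (ω:ℝ)⌋₊ : ℝ) := Nat.sub_one_lt_floor _
  calc ∑ ℓ ∈ Finset.range (ω+1), f ℓ
      ≤ ∑ ℓ ∈ Finset.range (ω+1), (if y*ω < (ℓ:ℝ) then (1:ℝ) else 0) := by
        apply Finset.sum_le_sum
        intro ℓ hℓ
        split_ifs with h
        · exact h1 ℓ
        · push_neg at h
          rw [hz ℓ (Nat.lt_succ_iff.1 (Finset.mem_range.1 hℓ)) h]
    _ = (((Finset.range (ω+1)).filter (fun ℓ : ℕ => y*ω < (ℓ:ℝ))).card : ℝ) := by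
        rw [Finset.sum_boole]
    _ ≤ ((ω - ⌊y * (ω:ℝ)⌋₊ : ℕ) : ℝ) := by
        have hsub : (Finset.range (ω+1)).filter (fun ℓ : ℕ => y*ω < (ℓ:ℝ)) ⊆
            Finset.Ico (⌊y * (ω:ℝ)⌋₊ + 1) (ω+1) := by
          intro ℓ hℓ
          rw [Finset.mem_filter, Finset.mem_range] at hℓ
          rw [Finset.mem_Ico]
          refine ⟨?_, hℓ.1⟩
          have : ⌊y * (ω:ℝ)⌋₊ < ℓ :=
            (Nat.floor_lt (mul_nonneg hy0 (Nat.cast_nonneg _))).2 hℓ.2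
          omega
        have := Finset.card_le_card hsub
        rw [Nat.card_Ico] at this
        have h2 : ω + 1 - (⌊y * (ω:ℝ)⌋₊ + 1) = ω - ⌊y * (ω:ℝ)⌋₊ := by omega
        rw [h2] at this
        exact_mod_cast this
    _ ≤ (1-y) * ω + 1 := by
        rw [Nat.cast_sub hfl]
        push_cast
        linarith

/-- if `g_n : [0,1] → ℝ` are non-decreasing, `g : (0,1) → ℝ` is
non-decreasing, `ω_n → ∞` are positive integers, and for every continuous compactly
supported `F` one has `(1/ω_n) Σ_{ℓ=0}^{ω_n} F(g_n(ℓ/ω_n)) → ∫₀¹ F(g(y)) dy`,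
then `g_n(y) → g(y)` at every continuity point `y ∈ (0,1)` of `g`. -/
theorem stmt17 (g : ℕ → ℝ → ℝ) (G : ℝ → ℝ) (ω : ℕ → ℕ)
    (hωpos : ∀ n, 0 < ω n) (hω : Tendsto ω atTop atTop)
    (hmono : ∀ n, MonotoneOn (g n) (Set.Icc (0 : ℝ) 1))
    (hG : MonotoneOn G (Set.Ioo (0 : ℝ) 1))
    (herg : ∀ F : ℝ → ℝ, Continuous F → HasCompactSupport F →
      Tendsto (fun n => (1 / (ω n : ℝ)) *
          ∑ ℓ ∈ Finset.range (ω n + 1), F (g n ((ℓ : ℝ) / (ω n : ℝ))))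
        atTop (𝓝 (∫ y in Set.Ioo (0 : ℝ) 1, F (G y))))
    (y : ℝ) (hy : y ∈ Set.Ioo (0 : ℝ) 1)
    (hcont : ContinuousWithinAt G (Set.Ioo (0 : ℝ) 1) y) :
    Tendsto (fun n => g n y) atTop (𝓝 (G y)) := by
  obtain ⟨hy0, hy1⟩ := hy
  have hymem : y ∈ Set.Ioo (0:ℝ) 1 := ⟨hy0, hy1⟩
  have hyIcc : y ∈ Set.Icc (0:ℝ) 1 := ⟨hy0.le, hy1.le⟩
  rw [Metric.tendsto_nhds]
  intro ε hε
  have hε3 : (0:ℝ) < ε/3 := by linarith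
  obtain ⟨δ₀, hδ₀, hδ₀'⟩ := Metric.continuousWithinAt_iff.1 hcont (ε/3) hε3
  set η := min δ₀ (min y (1-y)) / 2 with hη_def
  have hηpos : 0 < η := by
    apply div_pos _ (by norm_num)
    exact lt_min hδ₀ (lt_min hy0 (by linarith))
  have hηδ : η < δ₀ := by
    have : η ≤ δ₀ / 2 := by
      apply div_le_div_of_nonneg_right (min_le_left _ _) (by norm_num) |>.trans_eq rfl
    linarith
  have hηy : η < y := by
    have : η ≤ y / 2 := by
      apply div_le_div_of_nonneg_right ((min_le_right _ _).trans (min_le_left _ _)) (by norm_num)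
    linarith
  have hηy1 : y + η < 1 := by
    have : η ≤ (1-y) / 2 := by
      apply div_le_div_of_nonneg_right ((min_le_right _ _).trans (min_le_right _ _)) (by norm_num)
    linarith
  have hωR : Tendsto (fun n => ((ω n : ℕ):ℝ)) atTop atTop :=
    tendsto_natCast_atTop_atTop.comp hω
  have hinv : Tendsto (fun n => ((ω n : ℝ))⁻¹) atTop (𝓝 0) :=
    hωR.inv_tendsto_atTop
  -- The value of the normalized sum for a test function F
  have key : ∀ n (F : ℝ → ℝ), (∀ t, F t ≤ 1) →
      (∀ ℓ ≤ ω n, y * (ω n : ℝ) ≤ (ℓ:ℝ) → F (g n ((ℓ:ℝ)/(ω n : ℝ))) = 0) →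
      (1 / (ω n : ℝ)) * ∑ ℓ ∈ Finset.range (ω n + 1), F (g n ((ℓ:ℝ)/(ω n : ℝ)))
        ≤ y + ((ω n : ℝ))⁻¹ := by
    intro n F hF1 hFz
    have hωn : (0:ℝ) < (ω n : ℝ) := by exact_mod_cast hωpos n
    have hsum := sum_le_count_upper (ω n) y hy0.le
      (fun ℓ => F (g n ((ℓ:ℝ)/(ω n : ℝ)))) (fun ℓ => hF1 _) hFz
    rw [one_div]
    calc ((ω n : ℝ))⁻¹ * ∑ ℓ ∈ Finset.range (ω n + 1), F (g n ((ℓ:ℝ)/(ω n : ℝ)))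
        ≤ ((ω n : ℝ))⁻¹ * (y * (ω n : ℝ) + 1) :=
          mul_le_mul_of_nonneg_left hsum (inv_nonneg.2 hωn.le)
      _ = y + ((ω n : ℝ))⁻¹ := by field_simp
  have key' : ∀ n (F : ℝ → ℝ), (∀ t, F t ≤ 1) →
      (∀ ℓ ≤ ω n, (ℓ:ℝ) ≤ y * (ω n : ℝ) → F (g n ((ℓ:ℝ)/(ω n : ℝ))) = 0) →
      (1 / (ω n : ℝ)) * ∑ ℓ ∈ Finset.range (ω n + 1), F (g n ((ℓ:ℝ)/(ω n : ℝ)))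
        ≤ (1 - y) + ((ω n : ℝ))⁻¹ := by
    intro n F hF1 hFz
    have hωn : (0:ℝ) < (ω n : ℝ) := by exact_mod_cast hωpos n
    have hsum := sum_le_count_lower (ω n) y hy0.le hy1.le
      (fun ℓ => F (g n ((ℓ:ℝ)/(ω n : ℝ)))) (fun ℓ => hF1 _) hFz
    rw [one_div]
    calc ((ω n : ℝ))⁻¹ * ∑ ℓ ∈ Finset.range (ω n + 1), F (g n ((ℓ:ℝ)/(ω n : ℝ)))
        ≤ ((ω n : ℝ))⁻¹ * ((1-y) * (ω n : ℝ) + 1) :=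
          mul_le_mul_of_nonneg_left hsum (inv_nonneg.2 hωn.le)
      _ = (1-y) + ((ω n : ℝ))⁻¹ := by field_simp
  -- membership of sample points
  have hsample : ∀ n, ∀ ℓ ≤ ω n, ((ℓ:ℝ)/(ω n : ℝ)) ∈ Set.Icc (0:ℝ) 1 := by
    intro n ℓ hℓ
    have hωn : (0:ℝ) < (ω n : ℝ) := by exact_mod_cast hωpos n
    constructor
    · positivity
    · rw [div_le_one hωn]; exact_mod_cast hℓ
  -- UPPER BOUND
  have upper : ∀ᶠ n in atTop, g n y < G y + ε := by
    set c := min (η/2) (y/2) with hc_def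
    have hc0 : 0 < c := lt_min (by linarith) (by linarith)
    have hcy : c < y := (min_le_right _ _).trans_lt (by linarith)
    have hcη : c ≤ η/2 := min_le_left _ _
    have hcmem : c ∈ Set.Ioo (0:ℝ) 1 := ⟨hc0, by linarith⟩
    set M := max 0 (-(G c)) with hM_def
    set A := -M with hA_def
    set B := G y + ε/3 with hB_def
    have hF1 : ∀ x ∈ Set.Ioo c (y+η), trap A B (ε/3) (G x) = 1 := by
      intro x hx
      have hxmem : x ∈ Set.Ioo (0:ℝ) 1 := ⟨hc0.trans hx.1, hx.2.trans hηy1⟩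
      apply trap_eq_one hε3
      · have h1 : A ≤ G c := by
          rw [hA_def, hM_def, neg_le]
          exact le_max_right _ _
        exact h1.trans (hG hcmem hxmem hx.1.le)
      · rcases le_or_gt x y with h | h
        · exact (hG hxmem hymem h).trans (by rw [hB_def]; linarith)
        · have hd : dist x y < δ₀ := by
            rw [Real.dist_eq, abs_of_pos (by linarith)]
            linarith [hx.2]
          have := hδ₀' hxmem hd
          rw [Real.dist_eq, abs_lt] at this
          rw [hB_def]; linarith [this.2]
    have hlb := trap_integral_lb hG hε3 hc0.le (by linarith) hηy1.le hF1
    have htend := herg (trap A B (ε/3)) (trap_cont _ _ _) (trap_support hε3)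
    have hev1 : ∀ᶠ n in atTop, y + η/4 <
        (1 / (ω n : ℝ)) * ∑ ℓ ∈ Finset.range (ω n + 1),
          trap A B (ε/3) (g n ((ℓ:ℝ)/(ω n : ℝ))) :=
      htend.eventually (eventually_gt_nhds (by linarith))
    have hev2 : ∀ᶠ n in atTop, ((ω n : ℝ))⁻¹ < η/4 :=
      hinv.eventually (eventually_lt_nhds (by linarith))
    filter_upwards [hev1, hev2] with n h1 h2
    by_contra hcon
    push_neg at hcon
    have hzero : ∀ ℓ ≤ ω n, y * (ω n : ℝ) ≤ (ℓ:ℝ) →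
        trap A B (ε/3) (g n ((ℓ:ℝ)/(ω n : ℝ))) = 0 := by
      intro ℓ hℓ hyℓ
      have hωn : (0:ℝ) < (ω n : ℝ) := by exact_mod_cast hωpos n
      have hyle : y ≤ (ℓ:ℝ)/(ω n : ℝ) := (le_div_iff₀ hωn).2 hyℓ
      have hmon : g n y ≤ g n ((ℓ:ℝ)/(ω n : ℝ)) :=
        hmono n hyIcc (hsample n ℓ hℓ) hyle
      apply trap_eq_zero_right hε3
      rw [hB_def]
      linarith
    have := key n (trap A B (ε/3)) (fun t => trap_le_one _ _ _ _) hzero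
    linarith
  -- LOWER BOUND
  have lower : ∀ᶠ n in atTop, G y - ε < g n y := by
    set c := min (η/2) ((1-y)/2) with hc_def
    have hc0 : 0 < c := lt_min (by linarith) (by linarith)
    have hcy : y < 1 - c := by
      have : c ≤ (1-y)/2 := min_le_right _ _
      linarith
    have hcη : c ≤ η/2 := min_le_left _ _
    have hcmem : (1-c) ∈ Set.Ioo (0:ℝ) 1 := ⟨by linarith, by linarith⟩
    set M := max 0 (G (1-c)) with hM_def
    set A := G y - ε/3 with hA_def
    set B := M with hB_def
    have hF1 : ∀ x ∈ Set.Ioo (y-η) (1-c), trap A B (ε/3) (G x) = 1 := by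
      intro x hx
      have hxmem : x ∈ Set.Ioo (0:ℝ) 1 := ⟨by linarith [hx.1], hx.2.trans_le (by linarith)⟩
      apply trap_eq_one hε3
      · rcases le_or_gt y x with h | h
        · have := hG hymem hxmem h
          rw [hA_def]; linarith
        · have hd : dist x y < δ₀ := by
            rw [Real.dist_eq, abs_of_nonpos (by linarith)]
            linarith [hx.1]
          have := hδ₀' hxmem hd
          rw [Real.dist_eq, abs_lt] at this
          rw [hA_def]; linarith [this.1]
      · have h1 : G x ≤ G (1-c) := hG hxmem hcmem hx.2.le
        exact h1.trans (le_max_right _ _)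
    have hlb := trap_integral_lb hG hε3 (by linarith : (0:ℝ) ≤ y - η)
      (by linarith) (by linarith) hF1
    have htend := herg (trap A B (ε/3)) (trap_cont _ _ _) (trap_support hε3)
    have hev1 : ∀ᶠ n in atTop, (1-y) + η/4 <
        (1 / (ω n : ℝ)) * ∑ ℓ ∈ Finset.range (ω n + 1),
          trap A B (ε/3) (g n ((ℓ:ℝ)/(ω n : ℝ))) :=
      htend.eventually (eventually_gt_nhds (by linarith))
    have hev2 : ∀ᶠ n in atTop, ((ω n : ℝ))⁻¹ < η/4 :=
      hinv.eventually (eventually_lt_nhds (by linarith))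
    filter_upwards [hev1, hev2] with n h1 h2
    by_contra hcon
    push_neg at hcon
    have hzero : ∀ ℓ ≤ ω n, (ℓ:ℝ) ≤ y * (ω n : ℝ) →
        trap A B (ε/3) (g n ((ℓ:ℝ)/(ω n : ℝ))) = 0 := by
      intro ℓ hℓ hyℓ
      have hωn : (0:ℝ) < (ω n : ℝ) := by exact_mod_cast hωpos n
      have hyle : (ℓ:ℝ)/(ω n : ℝ) ≤ y := (div_le_iff₀ hωn).2 hyℓ
      have hmon : g n ((ℓ:ℝ)/(ω n : ℝ)) ≤ g n y :=
        hmono n (hsample n ℓ hℓ) hyIcc hyle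
      apply trap_eq_zero_left hε3
      rw [hA_def]
      linarith
    have := key' n (trap A B (ε/3)) (fun t => trap_le_one _ _ _ _) hzero
    linarith
  filter_upwards [upper, lower] with n h1 h2
  rw [Real.dist_eq, abs_lt]
  constructor <;> linarith
end
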